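/- arXiv:2011.14391 — 5 statements merged into one kernel-verified Lean document; each statement's English description precedes it below -/
import Mathlib

section
/- Cost formula with process noise (the cost expression of Theorem 1 in covariance form): for every stable gain θ and positive semidefinite Σ₁, Σ_w ∈ ℝ^{d_x×d_x}, define the covariance recursion Σ_{t+1} := C_θ Σ_t C_θᵀ + Σ_w for t ≥ 1 with initial value Σ₁. Then the series (1−γ) ∑_{t=1}^∞ γ^{t−1} tr( (Q + θᵀRθ) Σ_t ) converges and equals (1−γ) tr( M(θ) Σ₁ ) + γ tr( M(θ) Σ_w ). -/
open Matrix
open scoped Matrix.Norms.L2Operator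

noncomputable section

/-- The closed-loop matrix `C_θ = A - B θ`. -/
def Cl {dx du : ℕ} (A : Matrix (Fin dx) (Fin dx) ℝ) (B : Matrix (Fin dx) (Fin du) ℝ)
    (θ : Matrix (Fin du) (Fin dx) ℝ) : Matrix (Fin dx) (Fin dx) ℝ :=
  A - B * θ

/-- A closed-loop matrix `C` is stable (for discount factor `γ`) if
`‖C^t‖ ≤ c rᵗ γ^{-t/2}` (L2 operator norm) for some `c > 0` and `r ∈ (0,1)`. -/
def IsStable (γ : ℝ) {dx : ℕ} (C : Matrix (Fin dx) (Fin dx) ℝ) : Prop :=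
  ∃ c > (0:ℝ), ∃ r ∈ Set.Ioo (0:ℝ) 1, ∀ t : ℕ, ‖C ^ t‖ ≤ c * r ^ t * γ ^ (-(t : ℝ) / 2)

/-- `M(θ) := ∑_{t=0}^∞ γᵗ (C_θᵀ)ᵗ (Q + θᵀ R θ) C_θᵗ`. -/
def Mmat {dx du : ℕ} (γ : ℝ) (A : Matrix (Fin dx) (Fin dx) ℝ) (B : Matrix (Fin dx) (Fin du) ℝ)
    (Q : Matrix (Fin dx) (Fin dx) ℝ) (R : Matrix (Fin du) (Fin du) ℝ)
    (θ : Matrix (Fin du) (Fin dx) ℝ) : Matrix (Fin dx) (Fin dx) ℝ :=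
  ∑' t : ℕ, γ ^ t • ((Cl A B θ)ᵀ ^ t * (Q + θᵀ * R * θ) * Cl A B θ ^ t)

/-- `Σ_θ := (1-γ) ∑_{t=0}^∞ γᵗ C_θᵗ Σ₁ (C_θᵀ)ᵗ`. -/
def SigMat {dx du : ℕ} (γ : ℝ) (A : Matrix (Fin dx) (Fin dx) ℝ) (B : Matrix (Fin dx) (Fin du) ℝ)
    (S1 : Matrix (Fin dx) (Fin dx) ℝ) (θ : Matrix (Fin du) (Fin dx) ℝ) :
    Matrix (Fin dx) (Fin dx) ℝ :=
  (1 - γ) • ∑' t : ℕ, γ ^ t • (Cl A B θ ^ t * S1 * (Cl A B θ)ᵀ ^ t)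

/-- `E_θ := (R + γ Bᵀ M(θ) B) θ - γ Bᵀ M(θ) A`. -/
def Emat {dx du : ℕ} (γ : ℝ) (A : Matrix (Fin dx) (Fin dx) ℝ) (B : Matrix (Fin dx) (Fin du) ℝ)
    (Q : Matrix (Fin dx) (Fin dx) ℝ) (R : Matrix (Fin du) (Fin du) ℝ)
    (θ : Matrix (Fin du) (Fin dx) ℝ) : Matrix (Fin du) (Fin dx) ℝ :=
  (R + γ • (Bᵀ * Mmat γ A B Q R θ * B)) * θ - γ • (Bᵀ * Mmat γ A B Q R θ * A)

/-- `J(θ) := (1-γ) tr(M(θ) Σ₁)`. -/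
def Jcost {dx du : ℕ} (γ : ℝ) (A : Matrix (Fin dx) (Fin dx) ℝ) (B : Matrix (Fin dx) (Fin du) ℝ)
    (Q : Matrix (Fin dx) (Fin dx) ℝ) (R : Matrix (Fin du) (Fin du) ℝ)
    (S1 : Matrix (Fin dx) (Fin dx) ℝ) (θ : Matrix (Fin du) (Fin dx) ℝ) : ℝ :=
  (1 - γ) * (Mmat γ A B Q R θ * S1).trace

/-- The smallest singular value of a square matrix, as the infimum of `‖Ax‖` over unit vectors. -/
def sigmaMin {m : Type*} [Fintype m] [DecidableEq m] (A : Matrix m m ℝ) : ℝ :=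
  ⨅ x : {x : EuclideanSpace ℝ m // ‖x‖ = 1}, ‖Matrix.toEuclideanLin A x.1‖

/-- The Frobenius norm of a matrix. -/
def frobNorm {m n : Type*} [Fintype m] [Fintype n] (A : Matrix m n ℝ) : ℝ :=
  Real.sqrt (∑ i, ∑ j, A i j ^ 2)

section Aux

lemma abs_entry_le_l2norm {d₁ d₂ : ℕ} (X : Matrix (Fin d₁) (Fin d₂) ℝ) (i : Fin d₁)
    (j : Fin d₂) : |X i j| ≤ ‖X‖ := by
  have h := X.l2_opNorm_mulVec (EuclideanSpace.single j (1:ℝ))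
  rw [EuclideanSpace.norm_single, norm_one, mul_one] at h
  refine le_trans ?_ h
  set y : EuclideanSpace ℝ (Fin d₁) :=
    (EuclideanSpace.equiv (Fin d₁) ℝ).symm (X *ᵥ (EuclideanSpace.single j (1:ℝ))) with hy
  have hyi : y i = X i j := by
    rw [hy]
    show (X *ᵥ Pi.single j (1:ℝ)) i = X i j
    rw [Matrix.mulVec_single]
    simp
  calc |X i j| = Real.sqrt ((y i) ^ 2) := by rw [Real.sqrt_sq_eq_abs, hyi]
    _ ≤ ‖y‖ := by
        rw [EuclideanSpace.norm_eq]
        apply Real.sqrt_le_sqrt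
        have := Finset.single_le_sum (f := fun k => ‖y k‖ ^ 2)
          (fun k _ => sq_nonneg _) (Finset.mem_univ i)
        simpa [Real.norm_eq_abs, sq_abs] using this

lemma abs_trace_le_l2norm {d : ℕ} (X : Matrix (Fin d) (Fin d) ℝ) :
    |X.trace| ≤ d * ‖X‖ := by
  calc |X.trace| ≤ ∑ i, |X i i| := by
        rw [Matrix.trace]; exact Finset.abs_sum_le_sum_abs _ _
    _ ≤ ∑ _i : Fin d, ‖X‖ := Finset.sum_le_sum fun i _ => abs_entry_le_l2norm X i i
    _ = d * ‖X‖ := by simp [Finset.sum_const, nsmul_eq_mul]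

lemma pow_norm_bound {d : ℕ} {γ : ℝ} (hγ : γ ∈ Set.Ioo (0:ℝ) 1)
    {C : Matrix (Fin d) (Fin d) ℝ} (h : IsStable γ C) :
    ∃ K > (0:ℝ), ∃ ρ : ℝ, ρ ∈ Set.Ioo (0:ℝ) 1 ∧
      ∀ t : ℕ, γ ^ t * (‖C ^ t‖ * ‖C ^ t‖) ≤ K * ρ ^ t := by
  obtain ⟨c, hc, r, hr, hb⟩ := h
  refine ⟨c * c, mul_pos hc hc, r * r,
    ⟨mul_pos hr.1 hr.1, by nlinarith [hr.1, hr.2]⟩, fun t => ?_⟩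
  have h1 := hb t
  have hnn : (0:ℝ) ≤ ‖C ^ t‖ := norm_nonneg _
  have hγpos : (0:ℝ) < γ := hγ.1
  have hgr : (0:ℝ) < γ ^ (-(t : ℝ) / 2) := Real.rpow_pos_of_pos hγpos _
  have hrt : (0:ℝ) ≤ c * r ^ t := mul_nonneg hc.le (pow_nonneg hr.1.le t)
  have h2 : ‖C ^ t‖ * ‖C ^ t‖ ≤
      (c * r ^ t) * (c * r ^ t) * (γ ^ (-(t:ℝ)/2) * γ ^ (-(t:ℝ)/2)) := by
    nlinarith [h1, hnn, hgr.le, hrt]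
  have h3 : γ ^ (-(t:ℝ)/2) * γ ^ (-(t:ℝ)/2) = γ ^ (-(t:ℝ)) := by
    rw [← Real.rpow_add hγpos]; congr 1; ring
  have h4 : γ ^ t * γ ^ (-(t:ℝ)) = 1 := by
    rw [← Real.rpow_natCast γ t, ← Real.rpow_add hγpos]; simp
  have h5 : γ ^ t * (‖C ^ t‖ * ‖C ^ t‖) ≤
      γ ^ t * ((c * r ^ t) * (c * r ^ t) * γ ^ (-(t:ℝ))) := by
    rw [← h3]; exact mul_le_mul_of_nonneg_left h2 (pow_pos hγpos t).le
  calc γ ^ t * (‖C ^ t‖ * ‖C ^ t‖)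
      ≤ γ ^ t * ((c * r ^ t) * (c * r ^ t) * γ ^ (-(t:ℝ))) := h5
    _ = (γ ^ t * γ ^ (-(t:ℝ))) * (c * c * (r * r) ^ t) := by rw [mul_pow]; ring
    _ = c * c * (r * r) ^ t := by rw [h4, one_mul]

lemma trace_cyclic_aux {d : ℕ} (X P W : Matrix (Fin d) (Fin d) ℝ) :
    (Xᵀ * P * X * W).trace = (P * (X * W * Xᵀ)).trace := by
  simp only [mul_assoc]
  rw [Matrix.trace_mul_comm]
  simp only [mul_assoc]

lemma summable_Mterms {dx du : ℕ} {γ : ℝ} (hγ : γ ∈ Set.Ioo (0:ℝ) 1)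
    (A : Matrix (Fin dx) (Fin dx) ℝ) (B : Matrix (Fin dx) (Fin du) ℝ)
    (Q : Matrix (Fin dx) (Fin dx) ℝ) (R : Matrix (Fin du) (Fin du) ℝ)
    (θ : Matrix (Fin du) (Fin dx) ℝ) (hθ : IsStable γ (Cl A B θ)) :
    Summable (fun t : ℕ =>
      γ ^ t • ((Cl A B θ)ᵀ ^ t * (Q + θᵀ * R * θ) * Cl A B θ ^ t)) := by
  obtain ⟨K, hK, ρ, hρ, hbd⟩ := pow_norm_bound hγ hθ
  set C := Cl A B θ with hC
  set P := Q + θᵀ * R * θ with hP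
  apply Summable.of_norm_bounded (g := fun t => (K * ‖P‖) * ρ ^ t)
  · exact (summable_geometric_of_lt_one hρ.1.le hρ.2).mul_left _
  · intro t
    have hCt : ‖Cᵀ ^ t‖ = ‖C ^ t‖ := by
      rw [← Matrix.transpose_pow, ← Matrix.conjTranspose_eq_transpose_of_trivial]
      exact Matrix.l2_opNorm_conjTranspose _
    have h1 : ‖Cᵀ ^ t * P * C ^ t‖ ≤ ‖C ^ t‖ * ‖P‖ * ‖C ^ t‖ := by
      calc ‖Cᵀ ^ t * P * C ^ t‖ ≤ ‖Cᵀ ^ t * P‖ * ‖C ^ t‖ := Matrix.l2_opNorm_mul _ _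
        _ ≤ (‖Cᵀ ^ t‖ * ‖P‖) * ‖C ^ t‖ :=
            mul_le_mul_of_nonneg_right (Matrix.l2_opNorm_mul _ _) (norm_nonneg _)
        _ = ‖C ^ t‖ * ‖P‖ * ‖C ^ t‖ := by rw [hCt]
    rw [norm_smul, Real.norm_eq_abs, abs_of_pos (pow_pos hγ.1 t)]
    calc γ ^ t * ‖Cᵀ ^ t * P * C ^ t‖
        ≤ γ ^ t * (‖C ^ t‖ * ‖P‖ * ‖C ^ t‖) :=
          mul_le_mul_of_nonneg_left h1 (pow_pos hγ.1 t).le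
      _ = (γ ^ t * (‖C ^ t‖ * ‖C ^ t‖)) * ‖P‖ := by ring
      _ ≤ K * ρ ^ t * ‖P‖ := mul_le_mul_of_nonneg_right (hbd t) (norm_nonneg _)
      _ = K * ‖P‖ * ρ ^ t := by ring

lemma hasSum_trace_M {dx du : ℕ} {γ : ℝ} (hγ : γ ∈ Set.Ioo (0:ℝ) 1)
    (A : Matrix (Fin dx) (Fin dx) ℝ) (B : Matrix (Fin dx) (Fin du) ℝ)
    (Q : Matrix (Fin dx) (Fin dx) ℝ) (R : Matrix (Fin du) (Fin du) ℝ)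
    (θ : Matrix (Fin du) (Fin dx) ℝ) (hθ : IsStable γ (Cl A B θ))
    (W : Matrix (Fin dx) (Fin dx) ℝ) :
    HasSum (fun t : ℕ => γ ^ t *
        ((Q + θᵀ * R * θ) * (Cl A B θ ^ t * W * (Cl A B θ)ᵀ ^ t)).trace)
      ((Mmat γ A B Q R θ * W).trace) := by
  have hM : HasSum (fun t : ℕ =>
      γ ^ t • ((Cl A B θ)ᵀ ^ t * (Q + θᵀ * R * θ) * Cl A B θ ^ t))
      (Mmat γ A B Q R θ) := by
    rw [Mmat]; exact (summable_Mterms hγ A B Q R θ hθ).hasSum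
  set φ : Matrix (Fin dx) (Fin dx) ℝ →ₗ[ℝ] ℝ :=
    (Matrix.traceLinearMap (Fin dx) ℝ ℝ).comp (LinearMap.mulRight ℝ W) with hφ
  have hφc : Continuous φ := φ.continuous_of_finiteDimensional
  have h2 := hM.map φ hφc
  have h3 : ∀ t : ℕ, φ (γ ^ t • ((Cl A B θ)ᵀ ^ t * (Q + θᵀ * R * θ) * Cl A B θ ^ t))
      = γ ^ t * ((Q + θᵀ * R * θ) * (Cl A B θ ^ t * W * (Cl A B θ)ᵀ ^ t)).trace := by
    intro t
    rw [φ.map_smul, smul_eq_mul]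
    congr 1
    rw [hφ]
    simp only [LinearMap.coe_comp, Function.comp_apply, LinearMap.mulRight_apply,
      Matrix.traceLinearMap_apply]
    rw [← Matrix.transpose_pow]
    exact trace_cyclic_aux _ _ _
  have h4 : φ (Mmat γ A B Q R θ) = (Mmat γ A B Q R θ * W).trace := by
    rw [hφ]; simp
  rw [← h4]
  have heq : (fun t : ℕ => γ ^ t *
      ((Q + θᵀ * R * θ) * (Cl A B θ ^ t * W * (Cl A B θ)ᵀ ^ t)).trace)
      = fun t : ℕ => φ (γ ^ t • ((Cl A B θ)ᵀ ^ t * (Q + θᵀ * R * θ) * Cl A B θ ^ t)) :=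
    funext fun t => (h3 t).symm
  rw [heq]
  simpa only [Function.comp_def] using h2

end Aux

set_option maxHeartbeats 1000000 in
/-- Cost formula with process noise (in covariance form): for stable `θ`
and positive semidefinite `Σ₁, Σ_w`, with the covariance recursion
`Σ_{t+1} = C_θ Σ_t C_θᵀ + Σ_w` started at `Σ₁`, the series
`(1-γ) ∑_{t=1}^∞ γ^{t-1} tr((Q + θᵀRθ) Σ_t)` converges and equals
`(1-γ) tr(M(θ) Σ₁) + γ tr(M(θ) Σ_w)`. -/
theorem cost_with_noise_covariance_form
    {dx du : ℕ} (γ : ℝ) (hγ : γ ∈ Set.Ioo (0:ℝ) 1)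
    (A : Matrix (Fin dx) (Fin dx) ℝ) (B : Matrix (Fin dx) (Fin du) ℝ)
    (Q : Matrix (Fin dx) (Fin dx) ℝ) (R : Matrix (Fin du) (Fin du) ℝ)
    (hQ : Qᵀ = Q) (hR : Rᵀ = R)
    (θ : Matrix (Fin du) (Fin dx) ℝ) (hθ : IsStable γ (Cl A B θ))
    (S1 Sw : Matrix (Fin dx) (Fin dx) ℝ) (hS1 : S1.PosSemidef) (hSw : Sw.PosSemidef)
    (Sig : ℕ → Matrix (Fin dx) (Fin dx) ℝ) (hSig0 : Sig 0 = S1)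
    (hSigRec : ∀ t : ℕ, Sig (t + 1) = Cl A B θ * Sig t * (Cl A B θ)ᵀ + Sw) :
    HasSum (fun t : ℕ => (1 - γ) * γ ^ t * ((Q + θᵀ * R * θ) * Sig t).trace)
      ((1 - γ) * (Mmat γ A B Q R θ * S1).trace + γ * (Mmat γ A B Q R θ * Sw).trace) := by
  have hγ0 : (0:ℝ) < γ := hγ.1
  have hγ1 : γ < 1 := hγ.2
  have h1γ : (0:ℝ) < 1 - γ := by linarith
  -- closed form for the covariance recursion
  have hclosed : ∀ t : ℕ, Sig t = Cl A B θ ^ t * S1 * (Cl A B θ)ᵀ ^ t +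
      ∑ s ∈ Finset.range t, Cl A B θ ^ s * Sw * (Cl A B θ)ᵀ ^ s := by
    intro t
    induction t with
    | zero => simp [hSig0]
    | succ t ih =>
      rw [hSigRec t, ih, mul_add, add_mul]
      rw [Finset.sum_range_succ' (fun s => Cl A B θ ^ s * Sw * (Cl A B θ)ᵀ ^ s) t]
      have e1 : Cl A B θ * (Cl A B θ ^ t * S1 * (Cl A B θ)ᵀ ^ t) * (Cl A B θ)ᵀ
          = Cl A B θ ^ (t+1) * S1 * (Cl A B θ)ᵀ ^ (t+1) := by
        rw [pow_succ', pow_succ]; simp only [mul_assoc]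
      have e2 : Cl A B θ * (∑ s ∈ Finset.range t,
            Cl A B θ ^ s * Sw * (Cl A B θ)ᵀ ^ s) * (Cl A B θ)ᵀ
          = ∑ s ∈ Finset.range t, Cl A B θ ^ (s+1) * Sw * (Cl A B θ)ᵀ ^ (s+1) := by
        rw [Finset.mul_sum, Finset.sum_mul]
        refine Finset.sum_congr rfl fun s _ => ?_
        rw [pow_succ', pow_succ]; simp only [mul_assoc]
      rw [e1, e2]
      simp only [pow_zero, one_mul, mul_one]
      abel
  -- the two basic trace series
  have h_b := hasSum_trace_M hγ A B Q R θ hθ S1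
  have h_a := hasSum_trace_M hγ A B Q R θ hθ Sw
  -- Part 1
  have Part1 : HasSum (fun t : ℕ => (1 - γ) * γ ^ t *
      ((Q + θᵀ * R * θ) * (Cl A B θ ^ t * S1 * (Cl A B θ)ᵀ ^ t)).trace)
      ((1 - γ) * (Mmat γ A B Q R θ * S1).trace) := by
    have := h_b.mul_left (1 - γ)
    simpa [mul_assoc] using this
  -- Part 2 : the noise double series
  obtain ⟨K, hK, ρ, hρ, hbd⟩ := pow_norm_bound hγ hθ
  set D : ℝ := (dx : ℝ) * ‖(Q + θᵀ * R * θ)‖ * ‖Sw‖ * K with hD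
  have hD0 : 0 ≤ D := by
    have : (0:ℝ) ≤ (dx:ℝ) := Nat.cast_nonneg dx
    positivity
  have hbound : ∀ s : ℕ, γ ^ s *
      |((Q + θᵀ * R * θ) * (Cl A B θ ^ s * Sw * (Cl A B θ)ᵀ ^ s)).trace| ≤ D * ρ ^ s := by
    intro s
    have hCt : ‖(Cl A B θ)ᵀ ^ s‖ = ‖Cl A B θ ^ s‖ := by
      rw [← Matrix.transpose_pow, ← Matrix.conjTranspose_eq_transpose_of_trivial]
      exact Matrix.l2_opNorm_conjTranspose _
    have h1 : |((Q + θᵀ * R * θ) * (Cl A B θ ^ s * Sw * (Cl A B θ)ᵀ ^ s)).trace|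
        ≤ (dx:ℝ) * (‖(Q + θᵀ * R * θ)‖ *
            (‖Cl A B θ ^ s‖ * ‖Sw‖ * ‖Cl A B θ ^ s‖)) := by
      refine (abs_trace_le_l2norm _).trans ?_
      refine mul_le_mul_of_nonneg_left ?_ (Nat.cast_nonneg dx)
      calc ‖(Q + θᵀ * R * θ) * (Cl A B θ ^ s * Sw * (Cl A B θ)ᵀ ^ s)‖
          ≤ ‖(Q + θᵀ * R * θ)‖ * ‖Cl A B θ ^ s * Sw * (Cl A B θ)ᵀ ^ s‖ :=
            Matrix.l2_opNorm_mul _ _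
        _ ≤ ‖(Q + θᵀ * R * θ)‖ * (‖Cl A B θ ^ s‖ * ‖Sw‖ * ‖Cl A B θ ^ s‖) := by
            refine mul_le_mul_of_nonneg_left ?_ (norm_nonneg _)
            calc ‖Cl A B θ ^ s * Sw * (Cl A B θ)ᵀ ^ s‖
                ≤ ‖Cl A B θ ^ s * Sw‖ * ‖(Cl A B θ)ᵀ ^ s‖ := Matrix.l2_opNorm_mul _ _
              _ ≤ (‖Cl A B θ ^ s‖ * ‖Sw‖) * ‖(Cl A B θ)ᵀ ^ s‖ :=
                  mul_le_mul_of_nonneg_right (Matrix.l2_opNorm_mul _ _) (norm_nonneg _)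
              _ = ‖Cl A B θ ^ s‖ * ‖Sw‖ * ‖Cl A B θ ^ s‖ := by rw [hCt]
    have h2 : γ ^ s * |((Q + θᵀ * R * θ) * (Cl A B θ ^ s * Sw * (Cl A B θ)ᵀ ^ s)).trace|
        ≤ ((dx:ℝ) * ‖(Q + θᵀ * R * θ)‖ * ‖Sw‖) * (γ ^ s * (‖Cl A B θ ^ s‖ * ‖Cl A B θ ^ s‖)) := by
      have := mul_le_mul_of_nonneg_left h1 (le_of_lt (pow_pos hγ0 s))
      calc γ ^ s * |((Q + θᵀ * R * θ) * (Cl A B θ ^ s * Sw * (Cl A B θ)ᵀ ^ s)).trace|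
          ≤ γ ^ s * ((dx:ℝ) * (‖(Q + θᵀ * R * θ)‖ *
              (‖Cl A B θ ^ s‖ * ‖Sw‖ * ‖Cl A B θ ^ s‖))) := this
        _ = ((dx:ℝ) * ‖(Q + θᵀ * R * θ)‖ * ‖Sw‖) *
              (γ ^ s * (‖Cl A B θ ^ s‖ * ‖Cl A B θ ^ s‖)) := by ring
    refine h2.trans ?_
    have h3 := mul_le_mul_of_nonneg_left (hbd s)
      (by positivity : (0:ℝ) ≤ (dx:ℝ) * ‖(Q + θᵀ * R * θ)‖ * ‖Sw‖)
    calc ((dx:ℝ) * ‖(Q + θᵀ * R * θ)‖ * ‖Sw‖) *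
          (γ ^ s * (‖Cl A B θ ^ s‖ * ‖Cl A B θ ^ s‖))
        ≤ ((dx:ℝ) * ‖(Q + θᵀ * R * θ)‖ * ‖Sw‖) * (K * ρ ^ s) := h3
      _ = D * ρ ^ s := by rw [hD]; ring
  -- the product series
  set F : ℕ × ℕ → ℝ := fun p =>
    ((1 - γ) * γ ^ (p.1 + 1) *
      ((Q + θᵀ * R * θ) * (Cl A B θ ^ p.1 * Sw * (Cl A B θ)ᵀ ^ p.1)).trace) * γ ^ p.2 with hF
  have hf1 : Summable (fun s : ℕ => ‖(1 - γ) * γ ^ (s + 1) *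
      ((Q + θᵀ * R * θ) * (Cl A B θ ^ s * Sw * (Cl A B θ)ᵀ ^ s)).trace‖) := by
    refine Summable.of_nonneg_of_le (fun s => norm_nonneg _) (fun s => ?_)
      (((summable_geometric_of_lt_one hρ.1.le hρ.2).mul_left ((1 - γ) * γ * D)))
    have : ‖(1 - γ) * γ ^ (s + 1) *
        ((Q + θᵀ * R * θ) * (Cl A B θ ^ s * Sw * (Cl A B θ)ᵀ ^ s)).trace‖
        = (1 - γ) * γ * (γ ^ s *
          |((Q + θᵀ * R * θ) * (Cl A B θ ^ s * Sw * (Cl A B θ)ᵀ ^ s)).trace|) := by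
      rw [Real.norm_eq_abs, abs_mul, abs_mul, abs_of_pos h1γ,
        abs_of_pos (pow_pos hγ0 (s + 1)), pow_succ']
      ring
    rw [this]
    calc (1 - γ) * γ * (γ ^ s *
          |((Q + θᵀ * R * θ) * (Cl A B θ ^ s * Sw * (Cl A B θ)ᵀ ^ s)).trace|)
        ≤ (1 - γ) * γ * (D * ρ ^ s) :=
          mul_le_mul_of_nonneg_left (hbound s) (by positivity)
      _ = (1 - γ) * γ * D * ρ ^ s := by ring
  have hf2 : Summable (fun k : ℕ => ‖γ ^ k‖) := by
    have := summable_geometric_of_lt_one hγ0.le hγ1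
    simpa [Real.norm_eq_abs, abs_pow, abs_of_pos hγ0] using this
  have hFsummable : Summable F := by
    rw [hF]
    exact summable_mul_of_summable_norm
      (f := fun s : ℕ => (1 - γ) * γ ^ (s + 1) *
        ((Q + θᵀ * R * θ) * (Cl A B θ ^ s * Sw * (Cl A B θ)ᵀ ^ s)).trace)
      (g := fun k : ℕ => γ ^ k) hf1 hf2
  have hFs : HasSum F (∑' p, F p) := hFsummable.hasSum
  -- fiberwise over the first coordinate
  have fiber1 : ∀ s : ℕ, HasSum (fun k => F (s, k))
      (γ ^ (s + 1) * ((Q + θᵀ * R * θ) * (Cl A B θ ^ s * Sw * (Cl A B θ)ᵀ ^ s)).trace) := by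
    intro s
    have hgeo := hasSum_geometric_of_lt_one hγ0.le hγ1
    have hmul := hgeo.mul_left ((1 - γ) * γ ^ (s + 1) *
      ((Q + θᵀ * R * θ) * (Cl A B θ ^ s * Sw * (Cl A B θ)ᵀ ^ s)).trace)
    have hval : ((1 - γ) * γ ^ (s + 1) *
        ((Q + θᵀ * R * θ) * (Cl A B θ ^ s * Sw * (Cl A B θ)ᵀ ^ s)).trace) * (1 - γ)⁻¹
        = γ ^ (s + 1) * ((Q + θᵀ * R * θ) * (Cl A B θ ^ s * Sw * (Cl A B θ)ᵀ ^ s)).trace := by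
      field_simp
    rw [hval] at hmul
    simp only [hF]
    exact hmul
  have hS2 : HasSum (fun s : ℕ => γ ^ (s + 1) *
      ((Q + θᵀ * R * θ) * (Cl A B θ ^ s * Sw * (Cl A B θ)ᵀ ^ s)).trace) (∑' p, F p) :=
    hFs.prod_fiberwise fiber1
  have hS3 : HasSum (fun s : ℕ => γ ^ (s + 1) *
      ((Q + θᵀ * R * θ) * (Cl A B θ ^ s * Sw * (Cl A B θ)ᵀ ^ s)).trace)
      (γ * (Mmat γ A B Q R θ * Sw).trace) := by
    have hma := h_a.mul_left γ
    have hfe : (fun s : ℕ => γ ^ (s + 1) *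
        ((Q + θᵀ * R * θ) * (Cl A B θ ^ s * Sw * (Cl A B θ)ᵀ ^ s)).trace)
        = fun s : ℕ => γ * (γ ^ s *
        ((Q + θᵀ * R * θ) * (Cl A B θ ^ s * Sw * (Cl A B θ)ᵀ ^ s)).trace) := by
      funext s; rw [pow_succ']; ring
    rw [hfe]
    exact hma
  have htsumF : ∑' p, F p = γ * (Mmat γ A B Q R θ * Sw).trace := hS2.unique hS3
  -- regroup the double series by the outer time index
  set G : ℕ × ℕ → ℝ := fun q => if q.2 < q.1 then (1 - γ) * γ ^ q.1 *
    ((Q + θᵀ * R * θ) * (Cl A B θ ^ q.2 * Sw * (Cl A B θ)ᵀ ^ q.2)).trace else 0 with hG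
  set e : ℕ × ℕ → ℕ × ℕ := fun p => (p.1 + p.2 + 1, p.1) with he_def
  have he : Function.Injective e := by
    intro p q h
    rw [he_def] at h
    simp only [Prod.mk.injEq] at h
    obtain ⟨h1, h2⟩ := h
    obtain ⟨p1, p2⟩ := p
    obtain ⟨q1, q2⟩ := q
    simp only at h1 h2
    subst h2
    simp only [Prod.mk.injEq]
    exact ⟨trivial, by omega⟩
  have hGe : ∀ q ∉ Set.range e, G q = 0 := by
    intro q hq
    by_cases h : q.2 < q.1
    · exfalso
      apply hq
      refine ⟨(q.2, q.1 - q.2 - 1), ?_⟩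
      rw [he_def]
      obtain ⟨q1, q2⟩ := q
      simp only [Prod.mk.injEq] at h ⊢
      exact ⟨by omega, trivial⟩
    · simp [hG, h]
  have hcomp : HasSum (G ∘ e) (∑' p, F p) := by
    have hge : G ∘ e = F := by
      funext p
      obtain ⟨s, k⟩ := p
      simp only [Function.comp_apply, hG, he_def, hF]
      rw [if_pos (by omega : s < s + k + 1)]
      have hsk : s + k + 1 = (s + 1) + k := by omega
      rw [hsk, pow_add]
      ring
    rw [hge]
    exact hFs
  have hGsum : HasSum G (∑' p, F p) := (he.hasSum_iff hGe).mp hcomp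
  have fiber2 : ∀ t : ℕ, HasSum (fun s => G (t, s))
      ((1 - γ) * γ ^ t * ∑ s ∈ Finset.range t,
        ((Q + θᵀ * R * θ) * (Cl A B θ ^ s * Sw * (Cl A B θ)ᵀ ^ s)).trace) := by
    intro t
    have h0 : ∀ s ∉ Finset.range t, G (t, s) = 0 := by
      intro s hs
      rw [Finset.mem_range] at hs
      simp [hG, hs]
    have hsum := hasSum_sum_of_ne_finset_zero (L := SummationFilter.unconditional ℕ) h0
    have hval : ∑ s ∈ Finset.range t, G (t, s)
        = (1 - γ) * γ ^ t * ∑ s ∈ Finset.range t,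
          ((Q + θᵀ * R * θ) * (Cl A B θ ^ s * Sw * (Cl A B θ)ᵀ ^ s)).trace := by
      rw [Finset.mul_sum]
      refine Finset.sum_congr rfl fun s hs => ?_
      rw [Finset.mem_range] at hs
      simp [hG, hs]
    rw [hval] at hsum
    exact hsum
  have Part2 : HasSum (fun t : ℕ => (1 - γ) * γ ^ t * ∑ s ∈ Finset.range t,
      ((Q + θᵀ * R * θ) * (Cl A B θ ^ s * Sw * (Cl A B θ)ᵀ ^ s)).trace)
      (γ * (Mmat γ A B Q R θ * Sw).trace) :=
    htsumF ▸ hGsum.prod_fiberwise fiber2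
  -- combine
  have hterm : (fun t : ℕ => (1 - γ) * γ ^ t * ((Q + θᵀ * R * θ) * Sig t).trace)
      = fun t : ℕ => (1 - γ) * γ ^ t *
          ((Q + θᵀ * R * θ) * (Cl A B θ ^ t * S1 * (Cl A B θ)ᵀ ^ t)).trace
        + (1 - γ) * γ ^ t * ∑ s ∈ Finset.range t,
          ((Q + θᵀ * R * θ) * (Cl A B θ ^ s * Sw * (Cl A B θ)ᵀ ^ s)).trace := by
    funext t
    rw [hclosed t, mul_add, Matrix.trace_add, Finset.mul_sum, Matrix.trace_sum]
    ring
  rw [hterm]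
  exact Part1.add Part2
end
end

section
/- One-step cost-difference identity: for any two stable gains θ and θ′, writing Δ := θ − θ′, the Lyapunov solutions satisfy M(θ) − M(θ′) = Δᵀ E_{θ′} + E_{θ′}ᵀ Δ + Δᵀ ( R + γ Bᵀ M(θ′) B ) Δ + γ C_θᵀ ( M(θ) − M(θ′) ) C_θ. -/
open Matrix
open scoped Matrix.Norms.L2Operator

noncomputable section

lemma norm_transpose {dx dy : ℕ} (X : Matrix (Fin dx) (Fin dy) ℝ) : ‖Xᵀ‖ = ‖X‖ := by
  rw [← conjTranspose_eq_transpose_of_trivial, l2_opNorm_conjTranspose]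

lemma summable_aux {dx : ℕ} {γ : ℝ} (hγ : γ ∈ Set.Ioo (0:ℝ) 1)
    (C S : Matrix (Fin dx) (Fin dx) ℝ) (hC : IsStable γ C) :
    Summable (fun t : ℕ => γ ^ t • (Cᵀ ^ t * S * C ^ t)) := by
  obtain ⟨c, hc, r, hr, hb⟩ := hC
  have hγ0 : (0:ℝ) < γ := hγ.1
  have hr0 : (0:ℝ) < r := hr.1
  apply Summable.of_norm_bounded (g := fun t : ℕ => (c * c * ‖S‖) * (r ^ 2) ^ t)
  · exact (summable_geometric_of_lt_one (by positivity) (by nlinarith [hr.1, hr.2])).mul_left _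
  · intro t
    have hγt : (0:ℝ) < γ ^ t := pow_pos hγ.1 t
    have hg : (0:ℝ) < γ ^ (-(t:ℝ)/2) := Real.rpow_pos_of_pos hγ.1 _
    have h1 : ‖Cᵀ ^ t‖ = ‖C ^ t‖ := by rw [← transpose_pow, _root_.norm_transpose]
    have hgg : γ ^ t * (γ ^ (-(t:ℝ)/2) * γ ^ (-(t:ℝ)/2)) = 1 := by
      rw [← Real.rpow_natCast γ t, ← Real.rpow_add hγ.1, ← Real.rpow_add hγ.1]
      rw [show (t:ℝ) + (-(t:ℝ)/2 + -(t:ℝ)/2) = 0 by ring, Real.rpow_zero]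
    have hmul : ‖Cᵀ ^ t * S * C ^ t‖ ≤ ‖C ^ t‖ * ‖S‖ * ‖C ^ t‖ := by
      calc ‖Cᵀ ^ t * S * C ^ t‖ ≤ ‖Cᵀ ^ t * S‖ * ‖C ^ t‖ := l2_opNorm_mul _ _
        _ ≤ ‖Cᵀ ^ t‖ * ‖S‖ * ‖C ^ t‖ :=
            mul_le_mul_of_nonneg_right (l2_opNorm_mul _ _) (norm_nonneg _)
        _ = ‖C ^ t‖ * ‖S‖ * ‖C ^ t‖ := by rw [h1]
    have hCt : ‖C ^ t‖ ≤ c * r ^ t * γ ^ (-(t:ℝ)/2) := hb t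
    have hCt0 : (0:ℝ) ≤ ‖C ^ t‖ := norm_nonneg _
    calc ‖γ ^ t • (Cᵀ ^ t * S * C ^ t)‖ = γ ^ t * ‖Cᵀ ^ t * S * C ^ t‖ := by
          rw [norm_smul, Real.norm_eq_abs, abs_of_pos hγt]
      _ ≤ γ ^ t * (‖C ^ t‖ * ‖S‖ * ‖C ^ t‖) := by
          exact mul_le_mul_of_nonneg_left hmul hγt.le
      _ ≤ γ ^ t * ((c * r ^ t * γ ^ (-(t:ℝ)/2)) * ‖S‖ * (c * r ^ t * γ ^ (-(t:ℝ)/2))) := by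
          gcongr <;> positivity
      _ = (c * c * ‖S‖) * (r ^ 2) ^ t := by
          rw [← pow_mul, show 2 * t = t + t from two_mul t, pow_add]
          linear_combination (c * c * ‖S‖ * (r ^ t * r ^ t)) * hgg

/-- the continuous linear map `X ↦ γ • (Cᵀ * X * C)` -/
def lyapCLM {dx : ℕ} (γ : ℝ) (C : Matrix (Fin dx) (Fin dx) ℝ) :
    Matrix (Fin dx) (Fin dx) ℝ →L[ℝ] Matrix (Fin dx) (Fin dx) ℝ :=
  LinearMap.toContinuousLinearMap
    (γ • ((LinearMap.mulLeft ℝ Cᵀ).comp (LinearMap.mulRight ℝ C)))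

lemma lyapCLM_apply {dx : ℕ} (γ : ℝ) (C X : Matrix (Fin dx) (Fin dx) ℝ) :
    lyapCLM γ C X = γ • (Cᵀ * X * C) := by
  simp [lyapCLM, LinearMap.mulLeft, LinearMap.mulRight, mul_assoc]

lemma lyap_eq {dx du : ℕ} {γ : ℝ} (hγ : γ ∈ Set.Ioo (0:ℝ) 1)
    (A : Matrix (Fin dx) (Fin dx) ℝ) (B : Matrix (Fin dx) (Fin du) ℝ)
    (Q : Matrix (Fin dx) (Fin dx) ℝ) (R : Matrix (Fin du) (Fin du) ℝ)
    (θ : Matrix (Fin du) (Fin dx) ℝ) (hθ : IsStable γ (Cl A B θ)) :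
    Mmat γ A B Q R θ
      = (Q + θᵀ * R * θ) + γ • ((Cl A B θ)ᵀ * Mmat γ A B Q R θ * Cl A B θ) := by
  set C := Cl A B θ with hC
  set S := Q + θᵀ * R * θ with hS
  have hsum := summable_aux hγ C S hθ
  have h0 : Mmat γ A B Q R θ = ∑' t : ℕ, γ ^ t • (Cᵀ ^ t * S * C ^ t) := rfl
  conv_lhs => rw [h0, Summable.tsum_eq_zero_add hsum]
  congr 1
  · simp
  · have hterm : ∀ n : ℕ, γ ^ (n + 1) • (Cᵀ ^ (n + 1) * S * C ^ (n + 1))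
        = lyapCLM γ C (γ ^ n • (Cᵀ ^ n * S * C ^ n)) := by
      intro n
      rw [lyapCLM_apply, Matrix.mul_smul, Matrix.smul_mul, smul_smul, ← pow_succ' γ]
      congr 1
      rw [pow_succ' Cᵀ, pow_succ C]
      noncomm_ring
    simp_rw [hterm]
    rw [← (lyapCLM γ C).map_tsum hsum, lyapCLM_apply, ← h0]

lemma Mmat_transpose {dx du : ℕ} {γ : ℝ} (hγ : γ ∈ Set.Ioo (0:ℝ) 1)
    (A : Matrix (Fin dx) (Fin dx) ℝ)
    (B : Matrix (Fin dx) (Fin du) ℝ) (Q : Matrix (Fin dx) (Fin dx) ℝ)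
    (R : Matrix (Fin du) (Fin du) ℝ) (hQ : Qᵀ = Q) (hR : Rᵀ = R)
    (θ : Matrix (Fin du) (Fin dx) ℝ) (hθ : IsStable γ (Cl A B θ)) :
    (Mmat γ A B Q R θ)ᵀ = Mmat γ A B Q R θ := by
  set C := Cl A B θ
  set S := Q + θᵀ * R * θ with hS
  have hsum := summable_aux hγ C S hθ
  have hSt : Sᵀ = S := by
    rw [hS]
    simp only [transpose_add, transpose_mul, hQ, hR, transpose_transpose]
    rw [← Matrix.mul_assoc]
  let T := (Matrix.transposeLinearEquiv (Fin dx) (Fin dx) ℝ ℝ).toLinearMap.toContinuousLinearMap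
  have hTapp : ∀ X : Matrix (Fin dx) (Fin dx) ℝ, T X = Xᵀ := fun _ => rfl
  calc (Mmat γ A B Q R θ)ᵀ = T (∑' t : ℕ, γ ^ t • (Cᵀ ^ t * S * C ^ t)) := rfl
    _ = ∑' t : ℕ, T (γ ^ t • (Cᵀ ^ t * S * C ^ t)) := T.map_tsum hsum
    _ = ∑' t : ℕ, γ ^ t • (Cᵀ ^ t * S * C ^ t) := by
        congr 1
        funext t
        rw [hTapp]
        simp [transpose_smul, transpose_mul, transpose_pow, transpose_transpose, hSt,
          Matrix.mul_assoc]
    _ = Mmat γ A B Q R θ := rfl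

/-- One-step cost-difference identity: for stable gains `θ, θ′` with
`Δ = θ − θ′`,
`M(θ) − M(θ′) = Δᵀ E_{θ′} + E_{θ′}ᵀ Δ + Δᵀ (R + γ Bᵀ M(θ′) B) Δ + γ C_θᵀ (M(θ) − M(θ′)) C_θ`. -/
theorem cost_difference_identity
    {dx du : ℕ} (γ : ℝ) (hγ : γ ∈ Set.Ioo (0:ℝ) 1)
    (A : Matrix (Fin dx) (Fin dx) ℝ) (B : Matrix (Fin dx) (Fin du) ℝ)
    (Q : Matrix (Fin dx) (Fin dx) ℝ) (R : Matrix (Fin du) (Fin du) ℝ)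
    (hQ : Qᵀ = Q) (hR : Rᵀ = R)
    (θ θ' : Matrix (Fin du) (Fin dx) ℝ)
    (hθ : IsStable γ (Cl A B θ)) (hθ' : IsStable γ (Cl A B θ')) :
    Mmat γ A B Q R θ - Mmat γ A B Q R θ'
      = (θ - θ')ᵀ * Emat γ A B Q R θ' + (Emat γ A B Q R θ')ᵀ * (θ - θ')
        + (θ - θ')ᵀ * (R + γ • (Bᵀ * Mmat γ A B Q R θ' * B)) * (θ - θ')
        + γ • ((Cl A B θ)ᵀ * (Mmat γ A B Q R θ - Mmat γ A B Q R θ') * Cl A B θ) := by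
  have hM := lyap_eq hγ A B Q R θ hθ
  have hM' := lyap_eq hγ A B Q R θ' hθ'
  have hMs : (Mmat γ A B Q R θ')ᵀ = Mmat γ A B Q R θ' :=
    Mmat_transpose hγ A B Q R hQ hR θ' hθ'
  conv_lhs => rw [hM, hM']
  simp only [Emat, Cl, transpose_sub, transpose_add, transpose_mul, transpose_smul,
    transpose_transpose, hR, hMs]
  simp only [sub_mul, mul_sub, add_mul, mul_add, Matrix.sub_mul, Matrix.mul_sub,
    Matrix.add_mul, Matrix.mul_add, Matrix.smul_mul, Matrix.mul_smul,
    smul_add, smul_sub, Matrix.mul_assoc]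
  module
end
end

section
/- Series form of the cost-difference (value-difference) lemma: for any two stable gains θ and θ′, writing Δ := θ − θ′ and G′ := R + γ Bᵀ M(θ′) B, one has M(θ) − M(θ′) = ∑_{t=0}^∞ γᵗ (C_θᵀ)ᵗ [ Δᵀ E_{θ′} + E_{θ′}ᵀ Δ + Δᵀ G′ Δ ] C_θᵗ, with the series converging in norm. -/
open Matrix
open scoped Matrix.Norms.L2Operator

noncomputable section

section CostDiffAux

open scoped Matrix.Norms.L2Operator

variable {dx du : ℕ}

lemma myNormT (X : Matrix (Fin dx) (Fin dx) ℝ) : ‖Xᵀ‖ = ‖X‖ := by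
  rw [← Matrix.conjTranspose_eq_transpose_of_trivial, Matrix.l2_opNorm_conjTranspose]

lemma myTermBound {γ : ℝ} (hγ : γ ∈ Set.Ioo (0:ℝ) 1) {C : Matrix (Fin dx) (Fin dx) ℝ}
    {c r : ℝ}
    (hb : ∀ t : ℕ, ‖C ^ t‖ ≤ c * r ^ t * γ ^ (-(t : ℝ) / 2))
    (X : Matrix (Fin dx) (Fin dx) ℝ) (t : ℕ) :
    ‖γ ^ t • (Cᵀ ^ t * X * C ^ t)‖ ≤ (c * c * ‖X‖) * (r ^ 2) ^ t := by
  have hγ0 : (0:ℝ) < γ := hγ.1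
  have hgt : (0:ℝ) < γ ^ t := pow_pos hγ0 t
  have hCt := hb t
  have hCt' : ‖Cᵀ ^ t‖ ≤ c * r ^ t * γ ^ (-(t : ℝ) / 2) := by
    rw [← Matrix.transpose_pow, myNormT]; exact hCt
  have hpos : (0:ℝ) ≤ c * r ^ t * γ ^ (-(t : ℝ) / 2) :=
    le_trans (norm_nonneg _) hCt
  have hX : ‖Cᵀ ^ t * X * C ^ t‖ ≤
      (c * r ^ t * γ ^ (-(t : ℝ) / 2)) * ‖X‖ * (c * r ^ t * γ ^ (-(t : ℝ) / 2)) := by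
    calc ‖Cᵀ ^ t * X * C ^ t‖ ≤ ‖Cᵀ ^ t * X‖ * ‖C ^ t‖ := norm_mul_le _ _
      _ ≤ (‖Cᵀ ^ t‖ * ‖X‖) * ‖C ^ t‖ :=
        mul_le_mul_of_nonneg_right (norm_mul_le _ _) (norm_nonneg _)
      _ ≤ (c * r ^ t * γ ^ (-(t : ℝ) / 2)) * ‖X‖ * (c * r ^ t * γ ^ (-(t : ℝ) / 2)) := by
        gcongr
  have h1 : γ ^ (-(t : ℝ) / 2) * γ ^ (-(t : ℝ) / 2) = (γ ^ t)⁻¹ := by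
    rw [← Real.rpow_add hγ0,
      show (-(t : ℝ) / 2 + -(t : ℝ) / 2) = -(t : ℝ) by ring,
      Real.rpow_neg hγ0.le, Real.rpow_natCast]
  calc ‖γ ^ t • (Cᵀ ^ t * X * C ^ t)‖ = γ ^ t * ‖Cᵀ ^ t * X * C ^ t‖ := by
        rw [norm_smul, Real.norm_eq_abs, abs_of_pos hgt]
    _ ≤ γ ^ t * ((c * r ^ t * γ ^ (-(t : ℝ) / 2)) * ‖X‖ * (c * r ^ t * γ ^ (-(t : ℝ) / 2))) :=
        mul_le_mul_of_nonneg_left hX hgt.le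
    _ = (c * c * ‖X‖) * (r ^ 2) ^ t * (γ ^ t * (γ ^ (-(t : ℝ) / 2) * γ ^ (-(t : ℝ) / 2))) := by
        ring
    _ = (c * c * ‖X‖) * (r ^ 2) ^ t := by
        rw [h1, mul_inv_cancel₀ hgt.ne', mul_one]

lemma mySummableNorm {γ : ℝ} (hγ : γ ∈ Set.Ioo (0:ℝ) 1) {C : Matrix (Fin dx) (Fin dx) ℝ}
    (hC : IsStable γ C) (X : Matrix (Fin dx) (Fin dx) ℝ) :
    Summable (fun t : ℕ => ‖γ ^ t • (Cᵀ ^ t * X * C ^ t)‖) := by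
  obtain ⟨c, hc, r, hr, hb⟩ := hC
  refine Summable.of_nonneg_of_le (fun _ => norm_nonneg _) (myTermBound hγ hb X) ?_
  exact (summable_geometric_of_lt_one (by positivity)
    (by nlinarith [hr.1, hr.2])).mul_left _

lemma myHasSumMmat {γ : ℝ} (hγ : γ ∈ Set.Ioo (0:ℝ) 1)
    (A : Matrix (Fin dx) (Fin dx) ℝ) (B : Matrix (Fin dx) (Fin du) ℝ)
    (Q : Matrix (Fin dx) (Fin dx) ℝ) (R : Matrix (Fin du) (Fin du) ℝ)
    (θ : Matrix (Fin du) (Fin dx) ℝ) (hθ : IsStable γ (Cl A B θ)) :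
    HasSum (fun t : ℕ => γ ^ t • ((Cl A B θ)ᵀ ^ t * (Q + θᵀ * R * θ) * Cl A B θ ^ t))
      (Mmat γ A B Q R θ) :=
  ((mySummableNorm hγ hθ _).of_norm).hasSum

lemma myMmatSymm {γ : ℝ} (hγ : γ ∈ Set.Ioo (0:ℝ) 1)
    (A : Matrix (Fin dx) (Fin dx) ℝ) (B : Matrix (Fin dx) (Fin du) ℝ)
    (Q : Matrix (Fin dx) (Fin dx) ℝ) (R : Matrix (Fin du) (Fin du) ℝ)
    (hQ : Qᵀ = Q) (hR : Rᵀ = R)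
    (θ : Matrix (Fin du) (Fin dx) ℝ) (hθ : IsStable γ (Cl A B θ)) :
    (Mmat γ A B Q R θ)ᵀ = Mmat γ A B Q R θ := by
  have hs := myHasSumMmat hγ A B Q R θ hθ
  have hiso : Isometry (Matrix.transpose : Matrix (Fin dx) (Fin dx) ℝ → _) :=
    AddMonoidHomClass.isometry_of_norm
      (Matrix.transposeAddEquiv (Fin dx) (Fin dx) ℝ) myNormT
  have h2 := hs.map (Matrix.transposeAddEquiv (Fin dx) (Fin dx) ℝ).toAddMonoidHom
    hiso.continuous
  simp only [AddEquiv.toAddMonoidHom_eq_coe, AddMonoidHom.coe_coe, Function.comp_def,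
    Matrix.transposeAddEquiv_apply, Matrix.transpose_smul, Matrix.transpose_mul,
    Matrix.transpose_pow, Matrix.transpose_transpose, Matrix.transpose_add,
    hQ, hR, Matrix.mul_assoc] at h2
  have hs' := hs
  simp only [Matrix.mul_assoc] at hs'
  exact h2.unique hs'

lemma myMmatLyap {γ : ℝ} (hγ : γ ∈ Set.Ioo (0:ℝ) 1)
    (A : Matrix (Fin dx) (Fin dx) ℝ) (B : Matrix (Fin dx) (Fin du) ℝ)
    (Q : Matrix (Fin dx) (Fin dx) ℝ) (R : Matrix (Fin du) (Fin du) ℝ)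
    (θ : Matrix (Fin du) (Fin dx) ℝ) (hθ : IsStable γ (Cl A B θ)) :
    Mmat γ A B Q R θ = (Q + θᵀ * R * θ)
      + γ • ((Cl A B θ)ᵀ * Mmat γ A B Q R θ * Cl A B θ) := by
  set C := Cl A B θ with hCdef
  set S := Q + θᵀ * R * θ with hSdef
  set f : ℕ → Matrix (Fin dx) (Fin dx) ℝ := fun t => γ ^ t • (Cᵀ ^ t * S * C ^ t) with hf
  have hsum : Summable f := (mySummableNorm hγ hθ S).of_norm
  have hMeq : Mmat γ A B Q R θ = ∑' t, f t := rfl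
  have key : (fun t => f (t + 1)) = fun t => γ • (Cᵀ * f t * C) := by
    funext t
    show γ ^ (t + 1) • (Cᵀ ^ (t + 1) * S * C ^ (t + 1))
      = γ • (Cᵀ * (γ ^ t • (Cᵀ ^ t * S * C ^ t)) * C)
    rw [Matrix.mul_smul, Matrix.smul_mul, smul_smul, ← pow_succ' γ t,
      pow_succ' Cᵀ t, pow_succ C t]
    simp only [Matrix.mul_assoc]
  have h2 : HasSum (fun t => γ • (Cᵀ * f t * C)) (γ • (Cᵀ * (∑' t, f t) * C)) :=
    ((hsum.hasSum.mul_left Cᵀ).mul_right C).const_smul γ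
  have h3 : ∑' t, f (t + 1) = γ • (Cᵀ * (∑' t, f t) * C) := by
    rw [key]; exact h2.tsum_eq
  have hf0 : f 0 = S := by simp [hf]
  conv_lhs => rw [hMeq, hsum.tsum_eq_zero_add, h3, hf0, ← hMeq]

lemma myPureId (γ : ℝ) (A : Matrix (Fin dx) (Fin dx) ℝ)
    (B : Matrix (Fin dx) (Fin du) ℝ) (Q : Matrix (Fin dx) (Fin dx) ℝ)
    (R : Matrix (Fin du) (Fin du) ℝ) (θ θ' : Matrix (Fin du) (Fin dx) ℝ)
    (M : Matrix (Fin dx) (Fin dx) ℝ) (hR : Rᵀ = R) (hM : Mᵀ = M) :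
    (θ - θ')ᵀ * ((R + γ • (Bᵀ * M * B)) * θ' - γ • (Bᵀ * M * A))
      + ((R + γ • (Bᵀ * M * B)) * θ' - γ • (Bᵀ * M * A))ᵀ * (θ - θ')
      + (θ - θ')ᵀ * (R + γ • (Bᵀ * M * B)) * (θ - θ')
      + ((Q + θ'ᵀ * R * θ') + γ • ((A - B * θ')ᵀ * M * (A - B * θ')))
    = (Q + θᵀ * R * θ) + γ • ((A - B * θ)ᵀ * M * (A - B * θ)) := by
  simp only [Matrix.transpose_sub, Matrix.transpose_add, Matrix.transpose_mul,
    Matrix.transpose_smul, Matrix.transpose_transpose, hR, hM,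
    Matrix.sub_mul, Matrix.mul_sub, Matrix.add_mul, Matrix.mul_add,
    Matrix.smul_mul, Matrix.mul_smul, smul_sub, smul_add, Matrix.mul_assoc]
  abel

end CostDiffAux

/-- Series form of the cost-difference (value-difference) lemma: for
stable gains `θ, θ′`, with `Δ = θ − θ′` and `G′ = R + γ Bᵀ M(θ′) B`,
`M(θ) − M(θ′) = ∑_{t=0}^∞ γᵗ (C_θᵀ)ᵗ [Δᵀ E_{θ′} + E_{θ′}ᵀ Δ + Δᵀ G′ Δ] C_θᵗ`,
the series converging in norm. -/
theorem cost_difference_series_form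
    {dx du : ℕ} (γ : ℝ) (hγ : γ ∈ Set.Ioo (0:ℝ) 1)
    (A : Matrix (Fin dx) (Fin dx) ℝ) (B : Matrix (Fin dx) (Fin du) ℝ)
    (Q : Matrix (Fin dx) (Fin dx) ℝ) (R : Matrix (Fin du) (Fin du) ℝ)
    (hQ : Qᵀ = Q) (hR : Rᵀ = R)
    (θ θ' : Matrix (Fin du) (Fin dx) ℝ)
    (hθ : IsStable γ (Cl A B θ)) (hθ' : IsStable γ (Cl A B θ')) :
    Summable (fun t : ℕ => ‖γ ^ t • ((Cl A B θ)ᵀ ^ t *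
        ((θ - θ')ᵀ * Emat γ A B Q R θ' + (Emat γ A B Q R θ')ᵀ * (θ - θ')
          + (θ - θ')ᵀ * (R + γ • (Bᵀ * Mmat γ A B Q R θ' * B)) * (θ - θ')) *
        Cl A B θ ^ t)‖)
    ∧ HasSum (fun t : ℕ => γ ^ t • ((Cl A B θ)ᵀ ^ t *
        ((θ - θ')ᵀ * Emat γ A B Q R θ' + (Emat γ A B Q R θ')ᵀ * (θ - θ')
          + (θ - θ')ᵀ * (R + γ • (Bᵀ * Mmat γ A B Q R θ' * B)) * (θ - θ')) *
        Cl A B θ ^ t))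
        (Mmat γ A B Q R θ - Mmat γ A B Q R θ') := by
  classical
  set C := Cl A B θ with hCdef
  set M' := Mmat γ A B Q R θ' with hM'def
  have hMsym : M'ᵀ = M' := myMmatSymm hγ A B Q R hQ hR θ' hθ'
  have hLyap := myMmatLyap hγ A B Q R θ' hθ'
  set D := (θ - θ')ᵀ * Emat γ A B Q R θ' + (Emat γ A B Q R θ')ᵀ * (θ - θ')
      + (θ - θ')ᵀ * (R + γ • (Bᵀ * Mmat γ A B Q R θ' * B)) * (θ - θ') with hDdef
  -- the key algebraic identity
  have hpure := myPureId γ A B Q R θ θ' M' hR hMsym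
  have hD : D = (Q + θᵀ * R * θ) + γ • (Cᵀ * M' * C) - M' := by
    rw [eq_sub_iff_add_eq]
    calc D + M' = D + ((Q + θ'ᵀ * R * θ')
        + γ • ((Cl A B θ')ᵀ * M' * Cl A B θ')) := by rw [← hLyap]
      _ = (Q + θᵀ * R * θ) + γ • (Cᵀ * M' * C) := by
        rw [hDdef, hCdef]
        show _ = (Q + θᵀ * R * θ) + γ • ((A - B * θ)ᵀ * M' * (A - B * θ))
        rw [← hpure]
        simp only [Emat, Cl, ← hM'def]
  constructor
  · exact mySummableNorm hγ hθ D
  · set S := Q + θᵀ * R * θ with hSdef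
    set f : ℕ → Matrix (Fin dx) (Fin dx) ℝ := fun t => γ ^ t • (Cᵀ ^ t * S * C ^ t) with hf
    set g : ℕ → Matrix (Fin dx) (Fin dx) ℝ := fun t => γ ^ t • (Cᵀ ^ t * M' * C ^ t) with hg
    have hfs : HasSum f (Mmat γ A B Q R θ) := myHasSumMmat hγ A B Q R θ hθ
    have hgsum : Summable g := (mySummableNorm hγ hθ M').of_norm
    have hgs : HasSum g (∑' t, g t) := hgsum.hasSum
    have h1 : HasSum (fun n => g (n + 1)) (∑' t, g t - g 0) := by
      rw [hasSum_nat_add_iff 1]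
      simpa using hgs
    have htel : HasSum (fun t => g (t + 1) - g t) (-(g 0)) := by
      have h2 := h1.sub hgs
      have h3 : ∑' t, g t - g 0 - ∑' t, g t = -(g 0) := by abel
      rwa [h3] at h2
    have hg0 : g 0 = M' := by simp [hg]
    have hmid : ∀ t : ℕ, γ ^ t • (Cᵀ ^ t * (γ • (Cᵀ * M' * C)) * C ^ t) = g (t + 1) := by
      intro t
      show γ ^ t • (Cᵀ ^ t * (γ • (Cᵀ * M' * C)) * C ^ t)
        = γ ^ (t + 1) • (Cᵀ ^ (t + 1) * M' * C ^ (t + 1))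
      rw [Matrix.mul_smul, Matrix.smul_mul, smul_smul, ← pow_succ γ t,
        pow_succ Cᵀ t, pow_succ' C t]
      simp only [Matrix.mul_assoc]
    have hfun : (fun t : ℕ => γ ^ t • (Cᵀ ^ t * D * C ^ t))
        = fun t => f t + (g (t + 1) - g t) := by
      funext t
      rw [hD]
      calc γ ^ t • (Cᵀ ^ t * (S + γ • (Cᵀ * M' * C) - M') * C ^ t)
          = f t + γ ^ t • (Cᵀ ^ t * (γ • (Cᵀ * M' * C)) * C ^ t) - g t := by
            simp only [hf, hg, Matrix.mul_add, Matrix.add_mul, Matrix.mul_sub,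
              Matrix.sub_mul, smul_add, smul_sub]
        _ = f t + (g (t + 1) - g t) := by rw [hmid t]; abel
    have hfinal := hfs.add htel
    rw [hg0] at hfinal
    have : Mmat γ A B Q R θ + -M' = Mmat γ A B Q R θ - M' := by abel
    rw [this] at hfinal
    show HasSum (fun t : ℕ => γ ^ t • (Cᵀ ^ t * D * C ^ t)) (Mmat γ A B Q R θ - M')
    rw [hfun]
    exact hfinal
end
end

section
/- Finite-horizon approximation (Lemma 5, deterministic core): let θ be a stable gain with stability constants c > 0 and r ∈ (0,1) (i.e., ‖C_θᵗ‖ ≤ c rᵗ γ^{−t/2} for all t ≥ 0), and let Σ₁ be positive semidefinite. Define the truncated covariance Σ̃_{θ,T} := (1−γ) ∑_{t=0}^{T−1} γᵗ C_θᵗ Σ₁ (C_θᵀ)ᵗ and the truncated cost J̃_T(θ) := (1−γ) ∑_{t=0}^{T−1} γᵗ tr( (Q + θᵀRθ) C_θᵗ Σ₁ (C_θᵀ)ᵗ ). Then for every T ≥ 1: ‖Σ_θ − Σ̃_{θ,T}‖ ≤ (1−γ) c² ‖Σ₁‖ r^{2T} / (1 − r²), and | J(θ) − J̃_T(θ) |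 ≤ ( ‖Q‖ + ‖R‖ ‖θ‖² ) · (1−γ) c² tr(Σ₁) r^{2T} / (1 − r²). -/
open Matrix
open scoped Matrix.Norms.L2Operator

lemma quad_le {n : ℕ} (K : Matrix (Fin n) (Fin n) ℝ) (x : EuclideanSpace ℝ (Fin n)) :
    |x ⬝ᵥ (K *ᵥ x)| ≤ ‖K‖ * (‖x‖ * ‖x‖) := by
  have h1 : x ⬝ᵥ (K *ᵥ x) = inner (𝕜 := ℝ) x ((EuclideanSpace.equiv (Fin n) ℝ).symm (K *ᵥ x)) := by
    simp [inner, dotProduct, mul_comm]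
  rw [h1]
  calc |inner (𝕜 := ℝ) x ((EuclideanSpace.equiv (Fin n) ℝ).symm (K *ᵥ x))|
      ≤ ‖x‖ * ‖(EuclideanSpace.equiv (Fin n) ℝ).symm (K *ᵥ x)‖ := abs_real_inner_le_norm _ _
    _ ≤ ‖x‖ * (‖K‖ * ‖x‖) := by
        gcongr
        exact K.l2_opNorm_mulVec x
    _ = ‖K‖ * (‖x‖ * ‖x‖) := by ring

open scoped MatrixOrder in
lemma trace_mul_psd_le {n : ℕ} (K X : Matrix (Fin n) (Fin n) ℝ) (hX : X.PosSemidef) :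
    |(K * X).trace| ≤ ‖K‖ * X.trace := by
  set s := CFC.sqrt X with hs
  have hsym : ∀ i j, s i j = s j i := by
    intro i j
    have := (nonneg_iff_posSemidef.mp (CFC.sqrt_nonneg X)).1
    rw [Matrix.IsHermitian, conjTranspose_eq_transpose_of_trivial, ← hs] at this
    exact (congrFun (congrFun this i) j).symm
  have hss : s * s = X := CFC.sqrt_mul_sqrt_self X hX.nonneg
  let v : Fin n → EuclideanSpace ℝ (Fin n) := fun j => (WithLp.equiv 2 _).symm (fun a => s a j)
  have htr : (K * X).trace = (s * K * s).trace := by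
    rw [← hss, ← mul_assoc, Matrix.trace_mul_cycle]
  have hdiag : ∀ j, (s * K * s) j j = (v j) ⬝ᵥ (K *ᵥ (v j)) := by
    intro j
    simp only [Matrix.mul_apply, dotProduct, Matrix.mulVec, dotProduct, Finset.sum_mul,
      Finset.mul_sum, v, WithLp.equiv_symm_apply, PiLp.toLp_apply]
    rw [Finset.sum_comm]
    refine Finset.sum_congr rfl fun a _ => Finset.sum_congr rfl fun b _ => ?_
    rw [hsym j a]; ring
  have hXtr : X.trace = ∑ j, ‖v j‖ ^ 2 := by
    rw [← hss, Matrix.trace]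
    refine Finset.sum_congr rfl fun j _ => ?_
    rw [EuclideanSpace.norm_eq, Real.sq_sqrt (by positivity)]
    simp only [Matrix.mul_apply, Matrix.diag_apply, v, WithLp.equiv_symm_apply, PiLp.toLp_apply]
    refine Finset.sum_congr rfl fun a _ => ?_
    rw [hsym j a, Real.norm_eq_abs, sq_abs, sq]
  rw [htr, Matrix.trace, hXtr, Finset.mul_sum]
  calc |∑ j, (s * K * s).diag j| ≤ ∑ j, |(s * K * s) j j| := Finset.abs_sum_le_sum_abs _ _
    _ ≤ ∑ j, ‖K‖ * ‖v j‖ ^ 2 := by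
        refine Finset.sum_le_sum fun j _ => ?_
        rw [hdiag j, sq]
        exact quad_le K _

noncomputable section

lemma psd_trace_nonneg {n : ℕ} {X : Matrix (Fin n) (Fin n) ℝ} (hX : X.PosSemidef) :
    (0:ℝ) ≤ X.trace :=
  hX.trace_nonneg

set_option maxHeartbeats 1000000 in
/-- Finite-horizon approximation (deterministic core): for a stable gain
`θ` with stability constants `c > 0`, `r ∈ (0,1)`, and `Σ₁ ⪰ 0`, the truncations
`Σ̃_{θ,T} = (1−γ) ∑_{t=0}^{T−1} γᵗ C_θᵗ Σ₁ (C_θᵀ)ᵗ` and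
`J̃_T(θ) = (1−γ) ∑_{t=0}^{T−1} γᵗ tr((Q + θᵀRθ) C_θᵗ Σ₁ (C_θᵀ)ᵗ)` satisfy, for `T ≥ 1`,
`‖Σ_θ − Σ̃_{θ,T}‖ ≤ (1−γ) c² ‖Σ₁‖ r^{2T} / (1 − r²)` and
`|J(θ) − J̃_T(θ)| ≤ (‖Q‖ + ‖R‖‖θ‖²) (1−γ) c² tr(Σ₁) r^{2T} / (1 − r²)`. -/
theorem finite_horizon_approximation
    {dx du : ℕ} (γ : ℝ) (hγ : γ ∈ Set.Ioo (0:ℝ) 1)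
    (A : Matrix (Fin dx) (Fin dx) ℝ) (B : Matrix (Fin dx) (Fin du) ℝ)
    (Q : Matrix (Fin dx) (Fin dx) ℝ) (R : Matrix (Fin du) (Fin du) ℝ)
    (S1 : Matrix (Fin dx) (Fin dx) ℝ)
    (hQ : Qᵀ = Q) (hR : Rᵀ = R) (hS1 : S1.PosSemidef)
    (θ : Matrix (Fin du) (Fin dx) ℝ)
    (c r : ℝ) (hc : 0 < c) (hr : r ∈ Set.Ioo (0:ℝ) 1)
    (hstab : ∀ t : ℕ, ‖Cl A B θ ^ t‖ ≤ c * r ^ t * γ ^ (-(t : ℝ) / 2))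
    (T : ℕ) (hT : 1 ≤ T) :
    ‖SigMat γ A B S1 θ -
        (1 - γ) • ∑ t ∈ Finset.range T, γ ^ t • (Cl A B θ ^ t * S1 * (Cl A B θ)ᵀ ^ t)‖
      ≤ (1 - γ) * c ^ 2 * ‖S1‖ * r ^ (2 * T) / (1 - r ^ 2)
    ∧ |Jcost γ A B Q R S1 θ -
        (1 - γ) * ∑ t ∈ Finset.range T,
          γ ^ t * ((Q + θᵀ * R * θ) * (Cl A B θ ^ t * S1 * (Cl A B θ)ᵀ ^ t)).trace|
      ≤ (‖Q‖ + ‖R‖ * ‖θ‖ ^ 2) * ((1 - γ) * c ^ 2 * S1.trace * r ^ (2 * T) / (1 - r ^ 2)) := by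
  obtain ⟨hγ0, hγ1⟩ := hγ
  obtain ⟨hr0, hr1⟩ := hr
  set C := Cl A B θ with hC
  set K := Q + θᵀ * R * θ with hK
  have hγ1' : (0:ℝ) < 1 - γ := by linarith
  have hr2 : r ^ 2 < 1 := by nlinarith
  have hr2pos : (0:ℝ) < 1 - r ^ 2 := by nlinarith
  have hgeoHS : HasSum (fun i : ℕ => (r ^ 2) ^ i) (1 - r ^ 2)⁻¹ :=
    hasSum_geometric_of_lt_one (by positivity) hr2
  have hgeo : Summable (fun t : ℕ => (r ^ 2) ^ t) := hgeoHS.summable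
  have htail : ∀ a : ℝ, HasSum (fun i : ℕ => a * (r ^ 2) ^ (i + T))
      (a * r ^ (2 * T) / (1 - r ^ 2)) := by
    intro a
    have h := hgeoHS.mul_left (a * (r ^ 2) ^ T)
    have he : (fun i : ℕ => a * (r ^ 2) ^ T * (r ^ 2) ^ i)
        = fun i : ℕ => a * (r ^ 2) ^ (i + T) := by
      funext i; rw [pow_add]; ring
    rw [he] at h
    have hv : a * (r ^ 2) ^ T * (1 - r ^ 2)⁻¹ = a * r ^ (2 * T) / (1 - r ^ 2) := by
      rw [pow_mul]; ring
    rwa [hv] at h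
  have hkey : ∀ t : ℕ, γ ^ t * ‖C ^ t‖ ^ 2 ≤ c ^ 2 * (r ^ 2) ^ t := by
    intro t
    have h3 : (γ ^ (-(t : ℝ) / 2)) ^ 2 * γ ^ t = 1 := by
      rw [← Real.rpow_natCast γ t, ← Real.rpow_natCast (γ ^ (-(t : ℝ) / 2)) 2,
        ← Real.rpow_mul hγ0.le, ← Real.rpow_add hγ0]
      norm_num
    have h2 : ‖C ^ t‖ ^ 2 ≤ (c * r ^ t * γ ^ (-(t : ℝ) / 2)) ^ 2 :=
      pow_le_pow_left₀ (norm_nonneg _) (hstab t) 2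
    have hγt : (0:ℝ) < γ ^ t := pow_pos hγ0 t
    calc γ ^ t * ‖C ^ t‖ ^ 2 ≤ γ ^ t * (c * r ^ t * γ ^ (-(t : ℝ) / 2)) ^ 2 := by nlinarith
      _ = c ^ 2 * (r ^ t) ^ 2 * ((γ ^ (-(t : ℝ) / 2)) ^ 2 * γ ^ t) := by ring
      _ = c ^ 2 * (r ^ 2) ^ t := by rw [h3, ← pow_mul, ← pow_mul, mul_comm t 2, mul_one]
  have hTnorm : ∀ t : ℕ, ‖(C ^ t)ᵀ‖ = ‖C ^ t‖ := by
    intro t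
    rw [← conjTranspose_eq_transpose_of_trivial]
    exact l2_opNorm_conjTranspose _
  have hXnorm : ∀ t : ℕ, ‖C ^ t * S1 * (C ^ t)ᵀ‖ ≤ ‖C ^ t‖ ^ 2 * ‖S1‖ := by
    intro t
    calc ‖C ^ t * S1 * (C ^ t)ᵀ‖ ≤ ‖C ^ t * S1‖ * ‖(C ^ t)ᵀ‖ := l2_opNorm_mul _ _
      _ ≤ ‖C ^ t‖ * ‖S1‖ * ‖C ^ t‖ := by
          rw [hTnorm t]
          gcongr
          exact l2_opNorm_mul _ _
      _ = ‖C ^ t‖ ^ 2 * ‖S1‖ := by ring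
  have hfb : ∀ t : ℕ, ‖γ ^ t • (C ^ t * S1 * (C ^ t)ᵀ)‖ ≤ c ^ 2 * ‖S1‖ * (r ^ 2) ^ t := by
    intro t
    rw [norm_smul, Real.norm_eq_abs, abs_of_pos (pow_pos hγ0 t)]
    calc γ ^ t * ‖C ^ t * S1 * (C ^ t)ᵀ‖ ≤ γ ^ t * (‖C ^ t‖ ^ 2 * ‖S1‖) := by
          have := pow_pos hγ0 t
          nlinarith [hXnorm t, norm_nonneg (C ^ t * S1 * (C ^ t)ᵀ)]
      _ = (γ ^ t * ‖C ^ t‖ ^ 2) * ‖S1‖ := by ring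
      _ ≤ c ^ 2 * (r ^ 2) ^ t * ‖S1‖ := by
          have := hkey t
          nlinarith [norm_nonneg S1]
      _ = c ^ 2 * ‖S1‖ * (r ^ 2) ^ t := by ring
  have hfsum : Summable (fun t : ℕ => γ ^ t • (C ^ t * S1 * (C ^ t)ᵀ)) :=
    Summable.of_norm_bounded (hgeo.mul_left (c ^ 2 * ‖S1‖)) hfb
  simp only [← Matrix.transpose_pow]
  constructor
  · -- part 1
    have h1 : SigMat γ A B S1 θ -
        (1 - γ) • ∑ t ∈ Finset.range T, γ ^ t • (C ^ t * S1 * (C ^ t)ᵀ)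
        = (1 - γ) • ∑' i : ℕ, γ ^ (i + T) • (C ^ (i + T) * S1 * (C ^ (i + T))ᵀ) := by
      rw [SigMat, ← smul_sub]
      congr 1
      simp only [← Matrix.transpose_pow, ← hC]
      exact sub_eq_iff_eq_add'.mpr (Summable.sum_add_tsum_nat_add T hfsum).symm
    rw [h1, norm_smul, Real.norm_eq_abs, abs_of_pos hγ1']
    have hb : ‖∑' i : ℕ, γ ^ (i + T) • (C ^ (i + T) * S1 * (C ^ (i + T))ᵀ)‖
        ≤ c ^ 2 * ‖S1‖ * r ^ (2 * T) / (1 - r ^ 2) :=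
      tsum_of_norm_bounded (htail (c ^ 2 * ‖S1‖)) (fun i => hfb (i + T))
    calc (1 - γ) * ‖∑' i : ℕ, γ ^ (i + T) • (C ^ (i + T) * S1 * (C ^ (i + T))ᵀ)‖
        ≤ (1 - γ) * (c ^ 2 * ‖S1‖ * r ^ (2 * T) / (1 - r ^ 2)) := by
          exact mul_le_mul_of_nonneg_left hb hγ1'.le
      _ = (1 - γ) * c ^ 2 * ‖S1‖ * r ^ (2 * T) / (1 - r ^ 2) := by ring
  · -- part 2
    have hXpsd : ∀ t : ℕ, (C ^ t * S1 * (C ^ t)ᵀ).PosSemidef := by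
      intro t
      have := hS1.mul_mul_conjTranspose_same (C ^ t)
      rwa [conjTranspose_eq_transpose_of_trivial] at this
    have hS1tr : (0:ℝ) ≤ S1.trace := psd_trace_nonneg hS1
    have hKb : ‖K‖ ≤ ‖Q‖ + ‖R‖ * ‖θ‖ ^ 2 := by
      have h1 : ‖θᵀ * R * θ‖ ≤ ‖θ‖ * ‖R‖ * ‖θ‖ := by
        calc ‖θᵀ * R * θ‖ ≤ ‖θᵀ * R‖ * ‖θ‖ := l2_opNorm_mul _ _
          _ ≤ ‖θᵀ‖ * ‖R‖ * ‖θ‖ := by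
              gcongr
              exact l2_opNorm_mul _ _
          _ = ‖θ‖ * ‖R‖ * ‖θ‖ := by
              rw [← conjTranspose_eq_transpose_of_trivial θ, l2_opNorm_conjTranspose]
      calc ‖K‖ ≤ ‖Q‖ + ‖θᵀ * R * θ‖ := norm_add_le _ _
        _ ≤ ‖Q‖ + ‖R‖ * ‖θ‖ ^ 2 := by nlinarith
    -- trace of M * S1 as a series
    have hMb : ∀ t : ℕ, ‖γ ^ t • ((C ^ t)ᵀ * K * C ^ t)‖ ≤ c ^ 2 * ‖K‖ * (r ^ 2) ^ t := by
      intro t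
      rw [norm_smul, Real.norm_eq_abs, abs_of_pos (pow_pos hγ0 t)]
      have h1 : ‖(C ^ t)ᵀ * K * C ^ t‖ ≤ ‖C ^ t‖ ^ 2 * ‖K‖ := by
        calc ‖(C ^ t)ᵀ * K * C ^ t‖ ≤ ‖(C ^ t)ᵀ * K‖ * ‖C ^ t‖ := l2_opNorm_mul _ _
          _ ≤ ‖(C ^ t)ᵀ‖ * ‖K‖ * ‖C ^ t‖ := by
              gcongr
              exact l2_opNorm_mul _ _
          _ = ‖C ^ t‖ ^ 2 * ‖K‖ := by rw [hTnorm t]; ring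
      have hγt : (0:ℝ) < γ ^ t := pow_pos hγ0 t
      calc γ ^ t * ‖(C ^ t)ᵀ * K * C ^ t‖ ≤ (γ ^ t * ‖C ^ t‖ ^ 2) * ‖K‖ := by
            nlinarith [norm_nonneg ((C ^ t)ᵀ * K * C ^ t)]
        _ ≤ c ^ 2 * (r ^ 2) ^ t * ‖K‖ := by
            have := hkey t
            nlinarith [norm_nonneg K]
        _ = c ^ 2 * ‖K‖ * (r ^ 2) ^ t := by ring
    have hMsum : Summable (fun t : ℕ => γ ^ t • ((C ^ t)ᵀ * K * C ^ t)) :=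
      Summable.of_norm_bounded (hgeo.mul_left (c ^ 2 * ‖K‖)) hMb
    have htrace_id : ∀ t : ℕ, (((C ^ t)ᵀ * K * C ^ t) * S1).trace
        = (K * (C ^ t * S1 * (C ^ t)ᵀ)).trace := by
      intro t
      rw [mul_assoc, Matrix.trace_mul_cycle, Matrix.trace_mul_comm]
    have hXtr : ∀ t : ℕ, (C ^ t * S1 * (C ^ t)ᵀ).trace ≤ ‖C ^ t‖ ^ 2 * S1.trace := by
      intro t
      have h4 : (C ^ t * S1 * (C ^ t)ᵀ).trace = (((C ^ t)ᵀ * C ^ t) * S1).trace := by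
        rw [Matrix.trace_mul_cycle]
      have h5 : |((((C ^ t)ᵀ * C ^ t) * S1)).trace| ≤ ‖(C ^ t)ᵀ * C ^ t‖ * S1.trace :=
        trace_mul_psd_le _ S1 hS1
      have h6 : ‖(C ^ t)ᵀ * C ^ t‖ ≤ ‖C ^ t‖ ^ 2 := by
        calc ‖(C ^ t)ᵀ * C ^ t‖ ≤ ‖(C ^ t)ᵀ‖ * ‖C ^ t‖ := l2_opNorm_mul _ _
          _ = ‖C ^ t‖ ^ 2 := by rw [hTnorm t]; ring
      have h7 := le_abs_self ((((C ^ t)ᵀ * C ^ t) * S1)).trace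
      nlinarith
    have hjb : ∀ t : ℕ, |γ ^ t * (K * (C ^ t * S1 * (C ^ t)ᵀ)).trace|
        ≤ ‖K‖ * (c ^ 2 * S1.trace) * (r ^ 2) ^ t := by
      intro t
      have hγt : (0:ℝ) < γ ^ t := pow_pos hγ0 t
      have h8 := trace_mul_psd_le K _ (hXpsd t)
      have h9 := hXtr t
      have h10 := psd_trace_nonneg (hXpsd t)
      have h11 := hkey t
      rw [abs_mul, abs_of_pos hγt]
      calc γ ^ t * |(K * (C ^ t * S1 * (C ^ t)ᵀ)).trace|
          ≤ γ ^ t * (‖K‖ * (C ^ t * S1 * (C ^ t)ᵀ).trace) :=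
            mul_le_mul_of_nonneg_left h8 hγt.le
        _ = ‖K‖ * (γ ^ t * (C ^ t * S1 * (C ^ t)ᵀ).trace) := by ring
        _ ≤ ‖K‖ * (γ ^ t * (‖C ^ t‖ ^ 2 * S1.trace)) :=
            mul_le_mul_of_nonneg_left (mul_le_mul_of_nonneg_left h9 hγt.le) (norm_nonneg K)
        _ = (γ ^ t * ‖C ^ t‖ ^ 2) * S1.trace * ‖K‖ := by ring
        _ ≤ (c ^ 2 * (r ^ 2) ^ t) * S1.trace * ‖K‖ :=
            mul_le_mul_of_nonneg_right (mul_le_mul_of_nonneg_right h11 hS1tr) (norm_nonneg K)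
        _ = ‖K‖ * (c ^ 2 * S1.trace) * (r ^ 2) ^ t := by ring
    have hj : (Mmat γ A B Q R θ * S1).trace
        = ∑' t : ℕ, γ ^ t * (K * (C ^ t * S1 * (C ^ t)ᵀ)).trace := by
      rw [Mmat]
      simp only [← Matrix.transpose_pow, ← hC, ← hK]
      set Llin : Matrix (Fin dx) (Fin dx) ℝ →ₗ[ℝ] ℝ :=
        (Matrix.traceLinearMap (Fin dx) ℝ ℝ).comp (LinearMap.mulRight ℝ S1) with hLlin
      set L : Matrix (Fin dx) (Fin dx) ℝ →L[ℝ] ℝ :=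
        ⟨Llin, Llin.continuous_of_finiteDimensional⟩ with hL
      have hLap : ∀ M : Matrix (Fin dx) (Fin dx) ℝ, L M = (M * S1).trace := fun M => rfl
      have h12 : ((∑' t : ℕ, γ ^ t • ((C ^ t)ᵀ * K * C ^ t)) * S1).trace
          = L (∑' t : ℕ, γ ^ t • ((C ^ t)ᵀ * K * C ^ t)) := (hLap _).symm
      rw [h12, L.map_tsum hMsum]
      congr 1
      funext t
      rw [hLap, smul_mul_assoc, Matrix.trace_smul, smul_eq_mul, htrace_id t]
    have hjsum : Summable (fun t : ℕ => γ ^ t * (K * (C ^ t * S1 * (C ^ t)ᵀ)).trace) :=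
      Summable.of_norm_bounded (hgeo.mul_left (‖K‖ * (c ^ 2 * S1.trace)))
        (fun t => by rw [Real.norm_eq_abs]; exact hjb t)
    have h13 : Jcost γ A B Q R S1 θ -
        (1 - γ) * ∑ t ∈ Finset.range T, γ ^ t * (K * (C ^ t * S1 * (C ^ t)ᵀ)).trace
        = (1 - γ) * ∑' i : ℕ, γ ^ (i + T) * (K * (C ^ (i + T) * S1 * (C ^ (i + T))ᵀ)).trace := by
      rw [Jcost, hj, ← mul_sub]
      congr 1
      exact sub_eq_iff_eq_add'.mpr (Summable.sum_add_tsum_nat_add T hjsum).symm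
    rw [h13, abs_mul, abs_of_pos hγ1']
    have hb2 : |∑' i : ℕ, γ ^ (i + T) * (K * (C ^ (i + T) * S1 * (C ^ (i + T))ᵀ)).trace|
        ≤ ‖K‖ * (c ^ 2 * S1.trace) * r ^ (2 * T) / (1 - r ^ 2) := by
      have := tsum_of_norm_bounded (htail (‖K‖ * (c ^ 2 * S1.trace)))
        (fun i => by rw [Real.norm_eq_abs]; exact hjb (i + T))
      rwa [Real.norm_eq_abs] at this
    have hZ : (0:ℝ) ≤ (1 - γ) * c ^ 2 * S1.trace * r ^ (2 * T) / (1 - r ^ 2) := by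
      exact div_nonneg (mul_nonneg (mul_nonneg (mul_nonneg (by linarith) (sq_nonneg c))
        hS1tr) (pow_nonneg hr0.le _)) hr2pos.le
    calc (1 - γ) * |∑' i : ℕ, γ ^ (i + T) * (K * (C ^ (i + T) * S1 * (C ^ (i + T))ᵀ)).trace|
        ≤ (1 - γ) * (‖K‖ * (c ^ 2 * S1.trace) * r ^ (2 * T) / (1 - r ^ 2)) :=
          mul_le_mul_of_nonneg_left hb2 hγ1'.le
      _ = ‖K‖ * ((1 - γ) * c ^ 2 * S1.trace * r ^ (2 * T) / (1 - r ^ 2)) := by ring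
      _ ≤ (‖Q‖ + ‖R‖ * ‖θ‖ ^ 2) * ((1 - γ) * c ^ 2 * S1.trace * r ^ (2 * T) / (1 - r ^ 2)) :=
          mul_le_mul_of_nonneg_right hKb hZ
end
end

section
/- Local Lipschitz continuity of the LQ cost (Lemma 3): for every stable gain θ there exist ε > 0 and L > 0 such that every θ′ ∈ ℝ^{d_u×d_x} with ‖θ′ − θ‖_F < ε is stable and satisfies | J(θ′) − J(θ) | ≤ L ‖θ′ − θ‖_F. -/
open Matrix
open scoped Matrix.Norms.L2Operator

set_option maxHeartbeats 1600000

noncomputable section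

section AuxLemmas
variable {dx du : ℕ}

-- power difference identity
lemma pow_sub_pow_eq (C C' : Matrix (Fin dx) (Fin dx) ℝ) (t : ℕ) :
    C' ^ t - C ^ t = ∑ k ∈ Finset.range t, C ^ (t - 1 - k) * (C' - C) * C' ^ k := by
  induction t with
  | zero => simp
  | succ t ih =>
    have h1 : C' ^ (t+1) - C ^ (t+1)
        = C * (C' ^ t - C ^ t) + (C' - C) * C' ^ t := by
      rw [pow_succ', pow_succ']
      noncomm_ring
    rw [h1, ih, Finset.mul_sum, Finset.sum_range_succ]
    congr 1
    · apply Finset.sum_congr rfl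
      intro k hk
      have hk' : k < t := Finset.mem_range.mp hk
      have : t + 1 - 1 - k = (t - 1 - k) + 1 := by omega
      rw [this, pow_succ']
      noncomm_ring
    · simp

lemma perturb_pow_norm_le (C E : Matrix (Fin dx) (Fin dx) ℝ) (c ρ : ℝ)
    (hc : 1 ≤ c) (hρ : 0 ≤ ρ) (hC : ∀ t, ‖C ^ t‖ ≤ c * ρ ^ t) :
    ∀ t, ‖(C + E) ^ t‖ ≤ c * (ρ + c * ‖E‖) ^ t := by
  intro t
  induction t using Nat.strong_induction_on with
  | _ t ih =>
    have hE' : C + E - C = E := by abel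
    have hid := pow_sub_pow_eq C (C + E) t
    rw [hE'] at hid
    set x := ρ + c * ‖E‖ with hx
    have hc0 : (0:ℝ) ≤ c := le_trans zero_le_one hc
    have hxρ : ρ ≤ x := le_add_of_nonneg_right (by positivity)
    have hx0 : 0 ≤ x := le_trans hρ hxρ
    have key : ‖(C+E)^t - C^t‖ ≤ c * (x ^ t - ρ ^ t) := by
      rw [hid]
      calc ‖∑ k ∈ Finset.range t, C ^ (t-1-k) * E * (C+E) ^ k‖
          ≤ ∑ k ∈ Finset.range t, ‖C ^ (t-1-k) * E * (C+E) ^ k‖ :=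
            norm_sum_le _ _
        _ ≤ ∑ k ∈ Finset.range t, (c * ρ ^ (t-1-k)) * ‖E‖ * (c * x ^ k) := by
            apply Finset.sum_le_sum
            intro k hk
            calc ‖C ^ (t-1-k) * E * (C+E) ^ k‖
                ≤ ‖C ^ (t-1-k) * E‖ * ‖(C+E) ^ k‖ := norm_mul_le _ _
              _ ≤ ‖C ^ (t-1-k)‖ * ‖E‖ * ‖(C+E) ^ k‖ := by
                  apply mul_le_mul_of_nonneg_right (norm_mul_le _ _) (norm_nonneg _)
              _ ≤ (c * ρ ^ (t-1-k)) * ‖E‖ * (c * x ^ k) := by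
                  apply mul_le_mul
                  · exact mul_le_mul_of_nonneg_right (hC _) (norm_nonneg _)
                  · exact ih k (Finset.mem_range.mp hk)
                  · exact norm_nonneg _
                  · positivity
        _ = c * ((∑ k ∈ Finset.range t, x ^ k * ρ ^ (t-1-k)) * (x - ρ)) := by
            rw [Finset.sum_mul, Finset.mul_sum]
            apply Finset.sum_congr rfl
            intro k _
            have : x - ρ = c * ‖E‖ := by rw [hx]; ring
            rw [this]; ring
        _ = c * (x ^ t - ρ ^ t) := by rw [geom_sum₂_mul]
    calc ‖(C+E)^t‖ = ‖C^t + ((C+E)^t - C^t)‖ := by congr 1; abel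
      _ ≤ ‖C^t‖ + ‖(C+E)^t - C^t‖ := norm_add_le _ _
      _ ≤ c * ρ^t + c * (x^t - ρ^t) := add_le_add (hC t) key
      _ = c * x^t := by ring

lemma norm_pow_sub_pow_le (C C' : Matrix (Fin dx) (Fin dx) ℝ) (c ρ ρ' : ℝ) (hc : 0 ≤ c)
    (hρ : 0 ≤ ρ) (hρρ' : ρ ≤ ρ')
    (hC : ∀ t, ‖C ^ t‖ ≤ c * ρ ^ t) (hC' : ∀ t, ‖C' ^ t‖ ≤ c * ρ' ^ t) (t : ℕ) :
    ‖C' ^ t - C ^ t‖ ≤ c ^ 2 * ‖C' - C‖ * t * ρ' ^ (t - 1) := by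
  have hρ' : 0 ≤ ρ' := le_trans hρ hρρ'
  rw [pow_sub_pow_eq]
  calc ‖∑ k ∈ Finset.range t, C ^ (t-1-k) * (C' - C) * C' ^ k‖
      ≤ ∑ k ∈ Finset.range t, ‖C ^ (t-1-k) * (C' - C) * C' ^ k‖ := norm_sum_le _ _
    _ ≤ ∑ k ∈ Finset.range t, c ^ 2 * ‖C' - C‖ * ρ' ^ (t-1) := by
        apply Finset.sum_le_sum
        intro k hk
        have hk' : k < t := Finset.mem_range.mp hk
        calc ‖C ^ (t-1-k) * (C' - C) * C' ^ k‖
            ≤ ‖C ^ (t-1-k)‖ * ‖C' - C‖ * ‖C' ^ k‖ :=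
              le_trans (norm_mul_le _ _)
                (mul_le_mul_of_nonneg_right (norm_mul_le _ _) (norm_nonneg _))
          _ ≤ (c * ρ ^ (t-1-k)) * ‖C' - C‖ * (c * ρ' ^ k) := by
              apply mul_le_mul (mul_le_mul_of_nonneg_right (hC _) (norm_nonneg _)) (hC' _)
                (norm_nonneg _)
              positivity
          _ ≤ (c * ρ' ^ (t-1-k)) * ‖C' - C‖ * (c * ρ' ^ k) := by
              have := pow_le_pow_left₀ hρ hρρ' (t-1-k)
              apply mul_le_mul_of_nonneg_right
              apply mul_le_mul_of_nonneg_right (by nlinarith) (norm_nonneg _)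
              positivity
          _ = c ^ 2 * ‖C' - C‖ * (ρ' ^ (t-1-k) * ρ' ^ k) := by ring
          _ = c ^ 2 * ‖C' - C‖ * ρ' ^ (t-1) := by
              rw [← pow_add]
              congr 2
              omega
    _ = c ^ 2 * ‖C' - C‖ * t * ρ' ^ (t-1) := by
        rw [Finset.sum_const, Finset.card_range, nsmul_eq_mul]
        ring

lemma frobNorm_nonneg {m n : Type*} [Fintype m] [Fintype n] (A : Matrix m n ℝ) :
    0 ≤ frobNorm A := Real.sqrt_nonneg _

lemma l2_opNorm_le_frob {m n : ℕ} (X : Matrix (Fin m) (Fin n) ℝ) : ‖X‖ ≤ frobNorm X := by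
  rw [Matrix.l2_opNorm_def]
  apply ContinuousLinearMap.opNorm_le_bound _ (frobNorm_nonneg X)
  intro v
  have hv : ‖v‖ = Real.sqrt (∑ j, (v j) ^ 2) := by
    rw [EuclideanSpace.norm_eq]
    congr 1
    apply Finset.sum_congr rfl
    intro j _
    rw [Real.norm_eq_abs, sq_abs]
  have happ : ∀ i, ((Matrix.toEuclideanLin ≪≫ₗ LinearMap.toContinuousLinearMap) X v) i
      = ∑ j, X i j * v j := by
    intro i
    rfl
  rw [EuclideanSpace.norm_eq, hv]
  unfold frobNorm
  rw [← Real.sqrt_mul (by positivity)]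
  apply Real.sqrt_le_sqrt
  calc ∑ i, ‖((Matrix.toEuclideanLin ≪≫ₗ LinearMap.toContinuousLinearMap) X v) i‖ ^ 2
      = ∑ i, (∑ j, X i j * v j) ^ 2 := by
        apply Finset.sum_congr rfl
        intro i _
        rw [happ, Real.norm_eq_abs, sq_abs]
    _ ≤ ∑ i, (∑ j, X i j ^ 2) * (∑ j, (v j) ^ 2) := by
        apply Finset.sum_le_sum
        intro i _
        exact Finset.sum_mul_sq_le_sq_mul_sq _ _ _
    _ = (∑ i, ∑ j, X i j ^ 2) * (∑ j, (v j) ^ 2) := by rw [Finset.sum_mul]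

lemma abs_entry_le_l2_opNorm {m n : ℕ} (X : Matrix (Fin m) (Fin n) ℝ) (i : Fin m) (j : Fin n) :
    |X i j| ≤ ‖X‖ := by
  set u : EuclideanSpace ℝ (Fin n) := EuclideanSpace.single j (1:ℝ) with hu
  set w := (Matrix.toEuclideanLin ≪≫ₗ LinearMap.toContinuousLinearMap) X u with hw
  have hwapp : w i = X i j := by
    have : w i = ∑ k, X i k * u k := rfl
    rw [this, hu]
    simp [EuclideanSpace.single_apply]
  have h1 : |X i j| ≤ ‖w‖ := by
    rw [← hwapp, EuclideanSpace.norm_eq, ← Real.sqrt_sq_eq_abs]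
    apply Real.sqrt_le_sqrt
    have := Finset.single_le_sum (f := fun k => ‖w k‖^2) (fun k _ => by positivity)
      (Finset.mem_univ i)
    simpa [Real.norm_eq_abs, sq_abs] using this
  have h2 : ‖w‖ ≤ ‖X‖ * ‖u‖ := by
    rw [Matrix.l2_opNorm_def]
    exact ContinuousLinearMap.le_opNorm _ _
  have h3 : ‖u‖ = 1 := by rw [hu]; simp
  rw [h3, mul_one] at h2
  exact le_trans h1 h2

lemma l2_opNorm_transpose' {m n : ℕ} (X : Matrix (Fin m) (Fin n) ℝ) : ‖Xᵀ‖ = ‖X‖ := by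
  rw [← Matrix.conjTranspose_eq_transpose_of_trivial, Matrix.l2_opNorm_conjTranspose]

lemma norm_mul3_le {m n p q : ℕ} (X : Matrix (Fin m) (Fin n) ℝ) (Y : Matrix (Fin n) (Fin p) ℝ)
    (Z : Matrix (Fin p) (Fin q) ℝ) (x y z : ℝ)
    (hx : ‖X‖ ≤ x) (hy : ‖Y‖ ≤ y) (hz : ‖Z‖ ≤ z) : ‖X * Y * Z‖ ≤ x * y * z := by
  have h1 : ‖X * Y * Z‖ ≤ ‖X‖ * ‖Y‖ * ‖Z‖ :=
    le_trans (Matrix.l2_opNorm_mul _ _)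
      (mul_le_mul_of_nonneg_right (Matrix.l2_opNorm_mul _ _) (norm_nonneg _))
  refine le_trans h1 ?_
  have h2 := norm_nonneg X; have h3 := norm_nonneg Y; have h4 := norm_nonneg Z
  have hx0 : (0:ℝ) ≤ x := le_trans h2 hx
  have hy0 : (0:ℝ) ≤ y := le_trans h3 hy
  gcongr

lemma abs_trace_mul_le {n : ℕ} (X S : Matrix (Fin n) (Fin n) ℝ) :
    |(X * S).trace| ≤ (∑ i, ∑ j, |S j i|) * ‖X‖ := by
  rw [Matrix.trace]
  calc |∑ i, (X * S).diag i| ≤ ∑ i, |(X * S).diag i| := Finset.abs_sum_le_sum_abs _ _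
    _ ≤ ∑ i, ∑ j, |X i j| * |S j i| := by
        apply Finset.sum_le_sum
        intro i _
        calc |(X * S).diag i| = |∑ j, X i j * S j i| := by rw [Matrix.diag, Matrix.mul_apply]
          _ ≤ ∑ j, |X i j * S j i| := Finset.abs_sum_le_sum_abs _ _
          _ = ∑ j, |X i j| * |S j i| := by simp [abs_mul]
    _ ≤ ∑ i, ∑ j, ‖X‖ * |S j i| := by
        apply Finset.sum_le_sum; intro i _
        apply Finset.sum_le_sum; intro j _
        exact mul_le_mul_of_nonneg_right (abs_entry_le_l2_opNorm X i j) (abs_nonneg _)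
    _ = (∑ i, ∑ j, |S j i|) * ‖X‖ := by rw [Finset.sum_mul]; congr 1; ext i; rw [Finset.sum_mul]; congr 1; ext j; ring

lemma summable_of_geom_bound {n : ℕ} (f : ℕ → Matrix (Fin n) (Fin n) ℝ) (a x : ℝ)
    (hx0 : 0 ≤ x) (hx1 : x < 1) (h : ∀ t, ‖f t‖ ≤ a * x ^ t) : Summable f := by
  apply Summable.of_norm
  apply Summable.of_nonneg_of_le (fun t => norm_nonneg _) h
  exact (summable_geometric_of_lt_one hx0 hx1).mul_left a

def trMulCLM {n : ℕ} (S : Matrix (Fin n) (Fin n) ℝ) :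
    Matrix (Fin n) (Fin n) ℝ →L[ℝ] ℝ :=
  LinearMap.toContinuousLinearMap
    { toFun := fun X => (X * S).trace
      map_add' := fun X Y => by simp [add_mul, Matrix.trace_add]
      map_smul' := fun a X => by simp [Matrix.smul_mul, Matrix.trace_smul] }

lemma trMulCLM_apply {n : ℕ} (S X : Matrix (Fin n) (Fin n) ℝ) :
    trMulCLM S X = (X * S).trace := rfl

end AuxLemmas

/-- Local Lipschitz continuity of the LQ cost: for every stable gain `θ`
there exist `ε > 0` and `L > 0` such that every `θ′` with `‖θ′ − θ‖_F < ε` is stable and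
satisfies `|J(θ′) − J(θ)| ≤ L ‖θ′ − θ‖_F`. -/
theorem cost_locally_lipschitz
    {dx du : ℕ} (γ : ℝ) (hγ : γ ∈ Set.Ioo (0:ℝ) 1)
    (A : Matrix (Fin dx) (Fin dx) ℝ) (B : Matrix (Fin dx) (Fin du) ℝ)
    (Q : Matrix (Fin dx) (Fin dx) ℝ) (R : Matrix (Fin du) (Fin du) ℝ)
    (S1 : Matrix (Fin dx) (Fin dx) ℝ)
    (hQ : Qᵀ = Q) (hR : Rᵀ = R) (hS1 : S1.PosSemidef)
    (θ : Matrix (Fin du) (Fin dx) ℝ) (hθ : IsStable γ (Cl A B θ)) :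
    ∃ ε > (0:ℝ), ∃ L > (0:ℝ), ∀ θ' : Matrix (Fin du) (Fin dx) ℝ,
      frobNorm (θ' - θ) < ε →
        IsStable γ (Cl A B θ') ∧
        |Jcost γ A B Q R S1 θ' - Jcost γ A B Q R S1 θ| ≤ L * frobNorm (θ' - θ) := by
  obtain ⟨hγ0, hγ1⟩ := hγ
  obtain ⟨c₀, hc₀, r, hr, hb⟩ := hθ
  obtain ⟨hr0, hr1⟩ := hr
  set C := Cl A B θ with hC_def
  set g : ℝ := γ ^ (-(1:ℝ)/2) with hg
  have hg0 : 0 < g := Real.rpow_pos_of_pos hγ0 _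
  have hgt : ∀ t : ℕ, γ ^ (-(t:ℝ)/2) = g ^ t := by
    intro t
    rw [hg, ← Real.rpow_natCast (γ ^ (-(1:ℝ)/2)) t, ← Real.rpow_mul hγ0.le]
    congr 1
    ring
  have hγg : γ * g ^ 2 = 1 := by
    rw [hg, ← Real.rpow_natCast (γ ^ (-(1:ℝ)/2)) 2, ← Real.rpow_mul hγ0.le]
    rw [show (-(1:ℝ)/2 * (2:ℕ)) = -1 by push_cast; ring, Real.rpow_neg_one]
    exact mul_inv_cancel₀ hγ0.ne'
  set c := max c₀ 1 with hc_def
  have hc1 : (1:ℝ) ≤ c := le_max_right _ _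
  have hc0 : (0:ℝ) < c := lt_of_lt_of_le one_pos hc1
  set r' := (1 + r)/2 with hr'_def
  have hr'0 : 0 < r' := by rw [hr'_def]; linarith
  have hr'1 : r' < 1 := by rw [hr'_def]; linarith
  have hrr' : r ≤ r' := by rw [hr'_def]; linarith
  set ρ := r * g with hρ
  set ρ' := r' * g with hρ'
  have hρ0 : 0 < ρ := mul_pos hr0 hg0
  have hρ'0 : 0 < ρ' := mul_pos hr'0 hg0
  have hρρ' : ρ ≤ ρ' := by
    rw [hρ, hρ']
    exact mul_le_mul_of_nonneg_right hrr' hg0.le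
  have hCpow : ∀ t, ‖C ^ t‖ ≤ c * ρ ^ t := by
    intro t
    calc ‖C ^ t‖ ≤ c₀ * r ^ t * γ ^ (-(t:ℝ)/2) := hb t
      _ = c₀ * ρ ^ t := by rw [hgt t, hρ, mul_pow]; ring
      _ ≤ c * ρ ^ t := mul_le_mul_of_nonneg_right (le_max_left _ _) (by positivity)
  set y := r' ^ 2 with hy
  have hy0 : (0:ℝ) ≤ y := sq_nonneg _
  have hy1 : y < 1 := by rw [hy]; nlinarith
  have hγρ' : γ * (ρ' * ρ') = y := by
    rw [hρ', hy]
    linear_combination r' ^ 2 * hγg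
  have hγρt : ∀ t : ℕ, γ ^ t * (ρ' ^ t * ρ' ^ t) = y ^ t := by
    intro t
    rw [← mul_pow, ← mul_pow, hγρ']
  have hγρ2 : γ * (ρ * ρ) = r ^ 2 := by
    rw [hρ]
    linear_combination r ^ 2 * hγg
  have hr21 : r ^ 2 < 1 := by nlinarith
  set b1 := ‖B‖ + 1 with hb1
  have hb10 : (0:ℝ) < b1 := by rw [hb1]; positivity
  set ε := min 1 ((1 - r) * g / (2 * c * b1)) with hε
  have hε0 : 0 < ε := by
    apply lt_min one_pos
    apply div_pos (mul_pos (by linarith) hg0) (by positivity)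
  set K := Q + θᵀ * R * θ with hK
  set kK := ‖K‖ with hkK
  have hkK0 : 0 ≤ kK := norm_nonneg _
  set kb := ‖Q‖ + (‖θ‖ + 1) * ‖R‖ * (‖θ‖ + 1) with hkb
  have hkb0 : 0 ≤ kb := by rw [hkb]; positivity
  set dkc := (‖θ‖ + 1) * ‖R‖ + ‖θ‖ * ‖R‖ with hdkc
  have hdkc0 : 0 ≤ dkc := by rw [hdkc]; positivity
  set K1 := c ^ 3 * b1 * (kb + kK) / ρ' with hK1
  set K2 := c ^ 2 * dkc with hK2
  have hK10 : 0 ≤ K1 := by rw [hK1]; positivity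
  have hK20 : 0 ≤ K2 := by rw [hK2]; positivity
  set φ : ℕ → ℝ := fun t => K1 * (t * y ^ t) + K2 * y ^ t with hφ
  have hφ0 : ∀ t, 0 ≤ φ t := by
    intro t
    rw [hφ]
    positivity
  have hφsum : Summable φ := by
    apply Summable.add
    · apply Summable.mul_left
      have h := summable_pow_mul_geometric_of_norm_lt_one (R := ℝ) 1
        (r := y) (by rw [Real.norm_eq_abs, abs_of_nonneg hy0]; exact hy1)
      simpa [pow_one] using h
    · exact (summable_geometric_of_lt_one hy0 hy1).mul_left _
  set s := ∑ i, ∑ j, |S1 j i| with hs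
  have hs0 : 0 ≤ s := by rw [hs]; positivity
  set Φ := ∑' t, φ t with hΦ
  have hΦ0 : 0 ≤ Φ := tsum_nonneg hφ0
  clear_value c g r' ρ ρ' y b1 ε kK kb dkc K1 K2 s Φ φ
  refine ⟨ε, hε0, (1 - γ) * s * Φ + 1, ?_, ?_⟩
  · have hL0 : 0 ≤ (1 - γ) * s * Φ := mul_nonneg (mul_nonneg (by linarith) hs0) hΦ0
    linarith
  intro θ' hθ'
  set C' := Cl A B θ' with hC'_def
  set δ := frobNorm (θ' - θ) with hδ
  have hδ0 : 0 ≤ δ := frobNorm_nonneg _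
  have hδ1 : δ < 1 := lt_of_lt_of_le hθ' (by rw [hε]; exact min_le_left _ _)
  have hδ2 : δ < (1 - r) * g / (2 * c * b1) := lt_of_lt_of_le hθ' (by rw [hε]; exact min_le_right _ _)
  set E := C' - C with hE
  have hCE : C' = C + E := by rw [hE]; abel
  have hEform : E = -(B * (θ' - θ)) := by
    rw [hE, hC'_def, hC_def]
    show A - B * θ' - (A - B * θ) = -(B * (θ' - θ))
    rw [Matrix.mul_sub]
    abel
  have hop : ‖θ' - θ‖ ≤ δ := l2_opNorm_le_frob _
  have hEnorm : ‖E‖ ≤ b1 * δ := by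
    rw [hEform, norm_neg]
    refine le_trans (Matrix.l2_opNorm_mul _ _) ?_
    calc ‖B‖ * ‖θ' - θ‖ ≤ ‖B‖ * δ := mul_le_mul_of_nonneg_left hop (norm_nonneg B)
      _ ≤ b1 * δ := mul_le_mul_of_nonneg_right (by rw [hb1]; linarith [norm_nonneg B]) hδ0
  have hce : c * ‖E‖ ≤ (1 - r) * g / 2 := by
    have h3 : c * ‖E‖ ≤ c * (b1 * δ) := mul_le_mul_of_nonneg_left hEnorm hc0.le
    have h4 : c * (b1 * δ) ≤ (1 - r) * g / 2 := by
      rw [lt_div_iff₀ (mul_pos (mul_pos two_pos hc0) hb10)] at hδ2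
      calc c * (b1 * δ) = δ * (2 * c * b1) / 2 := by ring
        _ ≤ (1 - r) * g / 2 := by linarith
    linarith
  have hρE : ρ + c * ‖E‖ ≤ ρ' := by
    have h5 : ρ' - ρ = (1 - r) * g / 2 := by rw [hρ, hρ', hr'_def]; ring
    linarith
  have hρE0 : 0 ≤ ρ + c * ‖E‖ := add_nonneg hρ0.le (mul_nonneg hc0.le (norm_nonneg _))
  have hC'pow : ∀ t, ‖C' ^ t‖ ≤ c * ρ' ^ t := by
    intro t
    rw [hCE]
    refine le_trans (perturb_pow_norm_le C E c ρ hc1 hρ0.le hCpow t) ?_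
    exact mul_le_mul_of_nonneg_left (pow_le_pow_left₀ hρE0 hρE t) hc0.le
  have hstable : IsStable γ C' := by
    refine ⟨c, hc0, r', ⟨hr'0, hr'1⟩, ?_⟩
    intro t
    rw [hgt t]
    calc ‖C' ^ t‖ ≤ c * ρ' ^ t := hC'pow t
      _ = c * r' ^ t * g ^ t := by rw [hρ', mul_pow]; ring
  refine ⟨hstable, ?_⟩
  -- Lipschitz bound
  set K' := Q + θ'ᵀ * R * θ' with hK'
  have hθ'n : ‖θ'‖ ≤ ‖θ‖ + 1 := by
    calc ‖θ'‖ = ‖θ + (θ' - θ)‖ := by congr 1; abel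
      _ ≤ ‖θ‖ + ‖θ' - θ‖ := norm_add_le _ _
      _ ≤ ‖θ‖ + 1 := by linarith
  have hθT : ‖θᵀ‖ = ‖θ‖ := l2_opNorm_transpose' θ
  have hθ'T : ‖θ'ᵀ‖ = ‖θ'‖ := l2_opNorm_transpose' θ'
  have hK'n : ‖K'‖ ≤ kb := by
    rw [hK', hkb]
    refine le_trans (norm_add_le _ _) ?_
    have h6 : ‖θ'ᵀ * R * θ'‖ ≤ (‖θ‖ + 1) * ‖R‖ * (‖θ‖ + 1) :=
      norm_mul3_le _ _ _ _ _ _ (by rw [hθ'T]; exact hθ'n) le_rfl hθ'n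
    linarith
  have hKdiff : K' - K = (θ' - θ)ᵀ * R * θ' + θᵀ * R * (θ' - θ) := by
    rw [hK', hK, Matrix.transpose_sub, Matrix.sub_mul, Matrix.sub_mul, Matrix.mul_sub]
    abel
  have hdK : ‖K' - K‖ ≤ dkc * δ := by
    rw [hKdiff]
    refine le_trans (norm_add_le _ _) ?_
    have h7 : ‖(θ' - θ)ᵀ * R * θ'‖ ≤ δ * ‖R‖ * (‖θ‖ + 1) :=
      norm_mul3_le _ _ _ _ _ _
        (by rw [l2_opNorm_transpose']; exact hop) le_rfl hθ'n
    have h8 : ‖θᵀ * R * (θ' - θ)‖ ≤ ‖θ‖ * ‖R‖ * δ :=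
      norm_mul3_le _ _ _ _ _ _ (le_of_eq hθT) le_rfl hop
    rw [hdkc]
    refine le_trans (add_le_add h7 h8) (le_of_eq (by ring))
  set fθ : ℕ → Matrix (Fin dx) (Fin dx) ℝ := fun t => γ ^ t • (Cᵀ ^ t * K * C ^ t) with hfθ
  set fθ' : ℕ → Matrix (Fin dx) (Fin dx) ℝ := fun t => γ ^ t • (C'ᵀ ^ t * K' * C' ^ t) with hfθ'
  have hγt : ∀ t : ℕ, ‖γ ^ t‖ = γ ^ t := by
    intro t
    rw [Real.norm_eq_abs, abs_pow, abs_of_pos hγ0]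
  have hCTpow : ∀ t, ‖Cᵀ ^ t‖ ≤ c * ρ ^ t := by
    intro t
    rw [← Matrix.transpose_pow, l2_opNorm_transpose']
    exact hCpow t
  have hC'Tpow : ∀ t, ‖C'ᵀ ^ t‖ ≤ c * ρ' ^ t := by
    intro t
    rw [← Matrix.transpose_pow, l2_opNorm_transpose']
    exact hC'pow t
  have hCpow' : ∀ t, ‖C ^ t‖ ≤ c * ρ' ^ t := by
    intro t
    refine le_trans (hCpow t) ?_
    exact mul_le_mul_of_nonneg_left (pow_le_pow_left₀ hρ0.le hρρ' t) hc0.le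
  have hCTpow' : ∀ t, ‖Cᵀ ^ t‖ ≤ c * ρ' ^ t := by
    intro t
    rw [← Matrix.transpose_pow, l2_opNorm_transpose']
    exact hCpow' t
  have hfθb : ∀ t, ‖fθ t‖ ≤ c ^ 2 * kK * (r ^ 2) ^ t := by
    intro t
    rw [hfθ]
    simp only []
    rw [norm_smul, hγt]
    have h9 : ‖Cᵀ ^ t * K * C ^ t‖ ≤ (c * ρ ^ t) * kK * (c * ρ ^ t) :=
      norm_mul3_le _ _ _ _ _ _ (hCTpow t) hkK.ge (hCpow t)
    calc γ ^ t * ‖Cᵀ ^ t * K * C ^ t‖ ≤ γ ^ t * ((c * ρ ^ t) * kK * (c * ρ ^ t)) :=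
          mul_le_mul_of_nonneg_left h9 (by positivity)
      _ = c ^ 2 * kK * (γ ^ t * (ρ ^ t * ρ ^ t)) := by ring
      _ = c ^ 2 * kK * (r ^ 2) ^ t := by rw [← mul_pow, ← mul_pow, hγρ2]
  have hfθ'b : ∀ t, ‖fθ' t‖ ≤ c ^ 2 * kb * y ^ t := by
    intro t
    rw [hfθ']
    simp only []
    rw [norm_smul, hγt]
    have h9 : ‖C'ᵀ ^ t * K' * C' ^ t‖ ≤ (c * ρ' ^ t) * kb * (c * ρ' ^ t) :=
      norm_mul3_le _ _ _ _ _ _ (hC'Tpow t) hK'n (hC'pow t)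
    calc γ ^ t * ‖C'ᵀ ^ t * K' * C' ^ t‖ ≤ γ ^ t * ((c * ρ' ^ t) * kb * (c * ρ' ^ t)) :=
          mul_le_mul_of_nonneg_left h9 (by positivity)
      _ = c ^ 2 * kb * (γ ^ t * (ρ' ^ t * ρ' ^ t)) := by ring
      _ = c ^ 2 * kb * y ^ t := by rw [hγρt]
  have hfθsum : Summable fθ :=
    summable_of_geom_bound fθ (c ^ 2 * kK) (r ^ 2) (sq_nonneg r) hr21 hfθb
  have hfθ'sum : Summable fθ' :=
    summable_of_geom_bound fθ' (c ^ 2 * kb) y hy0 hy1 hfθ'b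
  set W : ℕ → Matrix (Fin dx) (Fin dx) ℝ := fun t => fθ' t - fθ t with hW
  have hWsum : Summable W := hfθ'sum.sub hfθsum
  have hWb : ∀ t, ‖W t‖ ≤ δ * φ t := by
    intro t
    have hdp : ‖C' ^ t - C ^ t‖ ≤ c ^ 2 * ‖E‖ * t * ρ' ^ (t - 1) := by
      have h10 := norm_pow_sub_pow_le C C' c ρ ρ' hc0.le hρ0.le hρρ' hCpow hC'pow t
      rwa [← hE] at h10
    have hdpT : ‖C'ᵀ ^ t - Cᵀ ^ t‖ ≤ c ^ 2 * ‖E‖ * t * ρ' ^ (t - 1) := by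
      rw [← Matrix.transpose_pow, ← Matrix.transpose_pow, ← Matrix.transpose_sub,
        l2_opNorm_transpose']
      exact hdp
    have hdecomp : C'ᵀ ^ t * K' * C' ^ t - Cᵀ ^ t * K * C ^ t
        = (C'ᵀ ^ t - Cᵀ ^ t) * K' * C' ^ t + Cᵀ ^ t * (K' - K) * C' ^ t
          + Cᵀ ^ t * K * (C' ^ t - C ^ t) := by noncomm_ring
    have h11 : ‖(C'ᵀ ^ t - Cᵀ ^ t) * K' * C' ^ t‖
        ≤ (c ^ 2 * ‖E‖ * t * ρ' ^ (t - 1)) * kb * (c * ρ' ^ t) :=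
      norm_mul3_le _ _ _ _ _ _ hdpT hK'n (hC'pow t)
    have h12 : ‖Cᵀ ^ t * (K' - K) * C' ^ t‖ ≤ (c * ρ' ^ t) * (dkc * δ) * (c * ρ' ^ t) :=
      norm_mul3_le _ _ _ _ _ _ (hCTpow' t) hdK (hC'pow t)
    have h13 : ‖Cᵀ ^ t * K * (C' ^ t - C ^ t)‖
        ≤ (c * ρ' ^ t) * kK * (c ^ 2 * ‖E‖ * t * ρ' ^ (t - 1)) :=
      norm_mul3_le _ _ _ _ _ _ (hCTpow' t) hkK.ge hdp
    have hDt : ‖C'ᵀ ^ t * K' * C' ^ t - Cᵀ ^ t * K * C ^ t‖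
        ≤ (c ^ 2 * ‖E‖ * t * ρ' ^ (t - 1)) * kb * (c * ρ' ^ t)
          + (c * ρ' ^ t) * (dkc * δ) * (c * ρ' ^ t)
          + (c * ρ' ^ t) * kK * (c ^ 2 * ‖E‖ * t * ρ' ^ (t - 1)) := by
      rw [hdecomp]
      exact le_trans (norm_add_le _ _)
        (add_le_add (le_trans (norm_add_le _ _) (add_le_add h11 h12)) h13)
    have hyt : γ ^ t * ((t:ℝ) * (ρ' ^ (t - 1) * ρ' ^ t)) ≤ (t:ℝ) * y ^ t / ρ' := by
      cases t with
      | zero => simp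
      | succ u =>
        rw [le_div_iff₀ hρ'0]
        apply le_of_eq
        have h14 := hγρt (u + 1)
        simp only [Nat.add_sub_cancel]
        push_cast
        linear_combination ((u:ℝ) + 1) * h14
    have hWnorm : ‖W t‖ = γ ^ t * ‖C'ᵀ ^ t * K' * C' ^ t - Cᵀ ^ t * K * C ^ t‖ := by
      rw [hW]
      simp only []
      rw [hfθ', hfθ]
      simp only []
      rw [← smul_sub, norm_smul, hγt]
    rw [hWnorm]
    have he0 : 0 ≤ ‖E‖ := norm_nonneg _
    have hty0 : 0 ≤ (t:ℝ) * y ^ t / ρ' := div_nonneg (mul_nonneg (Nat.cast_nonneg t) (pow_nonneg hy0 t)) hρ'0.le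
    calc γ ^ t * ‖C'ᵀ ^ t * K' * C' ^ t - Cᵀ ^ t * K * C ^ t‖
        ≤ γ ^ t * ((c ^ 2 * ‖E‖ * t * ρ' ^ (t - 1)) * kb * (c * ρ' ^ t)
          + (c * ρ' ^ t) * (dkc * δ) * (c * ρ' ^ t)
          + (c * ρ' ^ t) * kK * (c ^ 2 * ‖E‖ * t * ρ' ^ (t - 1))) :=
          mul_le_mul_of_nonneg_left hDt (by positivity)
      _ = (c ^ 3 * ‖E‖ * (kb + kK)) * (γ ^ t * ((t:ℝ) * (ρ' ^ (t - 1) * ρ' ^ t)))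
          + (c ^ 2 * dkc * δ) * (γ ^ t * (ρ' ^ t * ρ' ^ t)) := by ring
      _ ≤ (c ^ 3 * ‖E‖ * (kb + kK)) * ((t:ℝ) * y ^ t / ρ')
          + (c ^ 2 * dkc * δ) * (γ ^ t * (ρ' ^ t * ρ' ^ t)) := by
          have hcoef : 0 ≤ c ^ 3 * ‖E‖ * (kb + kK) :=
            mul_nonneg (mul_nonneg (pow_nonneg hc0.le 3) (norm_nonneg _)) (by linarith)
          exact add_le_add_left (mul_le_mul_of_nonneg_left hyt hcoef) _
      _ = (c ^ 3 * ‖E‖ * (kb + kK)) * ((t:ℝ) * y ^ t / ρ') + δ * (K2 * y ^ t) := by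
          rw [hγρt t, hK2]
          ring
      _ ≤ (c ^ 3 * (b1 * δ) * (kb + kK)) * ((t:ℝ) * y ^ t / ρ') + δ * (K2 * y ^ t) := by
          have h16 : c ^ 3 * ‖E‖ * (kb + kK) ≤ c ^ 3 * (b1 * δ) * (kb + kK) := by
            apply mul_le_mul_of_nonneg_right _ (by linarith)
            exact mul_le_mul_of_nonneg_left hEnorm (pow_nonneg hc0.le 3)
          exact add_le_add_left (mul_le_mul_of_nonneg_right h16 hty0) _
      _ = δ * φ t := by
          rw [hφ]
          simp only []
          rw [hK1]
          field_simp
  have hMdiff : Mmat γ A B Q R θ' - Mmat γ A B Q R θ = ∑' t, W t := by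
    rw [hW]
    have h17 : ∑' t, (fθ' t - fθ t) = (∑' t, fθ' t) - ∑' t, fθ t :=
      Summable.tsum_sub hfθ'sum hfθsum
    rw [h17]
    rfl
  have htr : Jcost γ A B Q R S1 θ' - Jcost γ A B Q R S1 θ
      = (1 - γ) * ∑' t, ((W t) * S1).trace := by
    unfold Jcost
    rw [← mul_sub]
    congr 1
    rw [← Matrix.trace_sub, ← Matrix.sub_mul, hMdiff]
    have h18 := ContinuousLinearMap.map_tsum (trMulCLM S1) hWsum
    simpa [trMulCLM_apply] using h18
  have hterm : ∀ t, |((W t) * S1).trace| ≤ s * δ * φ t := by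
    intro t
    refine le_trans (abs_trace_mul_le (W t) S1) ?_
    rw [← hs]
    calc s * ‖W t‖ ≤ s * (δ * φ t) := mul_le_mul_of_nonneg_left (hWb t) hs0
      _ = s * δ * φ t := by ring
  have habs : |∑' t, ((W t) * S1).trace| ≤ s * δ * Φ := by
    have hhs : HasSum (fun t => s * δ * φ t) (s * δ * Φ) := by
      rw [hΦ]
      exact (hφsum.hasSum).mul_left (s * δ)
    have h19 := tsum_of_norm_bounded hhs (fun t => by
      rw [Real.norm_eq_abs]; exact hterm t)
    exact h19
  rw [htr, abs_mul, abs_of_pos (by linarith : (0:ℝ) < 1 - γ)]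
  calc (1 - γ) * |∑' t, ((W t) * S1).trace| ≤ (1 - γ) * (s * δ * Φ) :=
        mul_le_mul_of_nonneg_left habs (by linarith)
    _ = ((1 - γ) * s * Φ) * δ := by ring
    _ ≤ ((1 - γ) * s * Φ + 1) * δ := mul_le_mul_of_nonneg_right (by linarith) hδ0
end
end
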